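/- arXiv:2308.07680 — 7 statements merged into one kernel-verified Lean document; each statement's English description precedes it below -/
import Mathlib

section
/- Let θ ∈ ℝ³ be a constant vector, let ε > 0, and let u : ℝ³ → ℝ be twice continuously differentiable on an open set Ω ⊆ ℝ³. Then J¹_θ(J⁰_θ u) = 0 on Ω, i.e. ε∇×(ε(∇u + u·θ)) + ε·θ×(ε(∇u + u·θ)) = 0 at every point of Ω (the convection–diffusion complex property at the first level of the sequence E_{−θ} ↪ C^∞ →^{J⁰_θ} C^∞ →^{J¹_θ} C^∞ →^{J²_θ} C^∞ → 0). -/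
open Real Matrix

/-- The gradient `∇u := (∂₁u, ∂₂u, ∂₃u)` of a scalar function on ℝ³. -/
noncomputable def grad (u : (Fin 3 → ℝ) → ℝ) (x : Fin 3 → ℝ) : Fin 3 → ℝ :=
  fun i => fderiv ℝ u x (Pi.single i 1)

/-- The curl `∇×v := (∂₂v₃−∂₃v₂, ∂₃v₁−∂₁v₃, ∂₁v₂−∂₂v₁)` of a vector field on ℝ³. -/
noncomputable def curl (v : (Fin 3 → ℝ) → (Fin 3 → ℝ)) (x : Fin 3 → ℝ) : Fin 3 → ℝ :=
  ![fderiv ℝ v x (Pi.single 1 1) 2 - fderiv ℝ v x (Pi.single 2 1) 1,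
    fderiv ℝ v x (Pi.single 2 1) 0 - fderiv ℝ v x (Pi.single 0 1) 2,
    fderiv ℝ v x (Pi.single 0 1) 1 - fderiv ℝ v x (Pi.single 1 1) 0]

/-- **First-level complex property `J¹_θ ∘ J⁰_θ = 0`.**
For a constant vector `θ ∈ ℝ³`, `ε > 0`, and `u : ℝ³ → ℝ` twice continuously
differentiable on an open set `Ω`, with `J⁰_θ u := ε • (∇u + u • θ)`, one has
`ε • ∇×(J⁰_θ u) + ε • (θ × J⁰_θ u) = 0` at every point of `Ω`. -/
theorem flux_complex_level_one
    (θ : Fin 3 → ℝ) (ε : ℝ) (hε : 0 < ε)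
    (Ω : Set (Fin 3 → ℝ)) (hΩ : IsOpen Ω)
    (u : (Fin 3 → ℝ) → ℝ) (hu : ContDiffOn ℝ 2 u Ω) :
    ∀ x ∈ Ω,
      ε • curl (fun y => ε • (grad u y + u y • θ)) x
        + ε • (θ ⨯₃ (ε • (grad u x + u x • θ))) = 0 := by
  intro x hx
  have hx2 : ContDiffAt ℝ 2 u x := hu.contDiffAt (hΩ.mem_nhds hx)
  have hdu : DifferentiableAt ℝ u x := hx2.differentiableAt (by norm_num)
  have hF : DifferentiableAt ℝ (fderiv ℝ u) x :=
    (hx2.fderiv_right (m := 1) (by norm_num)).differentiableAt (by norm_num)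
  set H := fderiv ℝ (fderiv ℝ u) x with hH
  set F := fderiv ℝ u x with hFdef
  have hsymm : ∀ v w, H v w = H w v := hx2.isSymmSndFDerivAt (by simp [minSmoothness_of_isRCLikeNormedField])
  -- derivative of grad u at x
  have hgrad : HasFDerivAt (grad u)
      (ContinuousLinearMap.pi (fun i => H.flip (Pi.single i 1))) x := by
    apply hasFDerivAt_pi.2
    intro i
    have h1 := (ContinuousLinearMap.apply ℝ ℝ (Pi.single i 1)).hasFDerivAt.comp x
      hF.hasFDerivAt
    convert h1 using 1
    · rfl
    · ext w; rfl
  have hsm : HasFDerivAt (fun y => u y • θ) (F.smulRight θ) x :=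
    hdu.hasFDerivAt.smul_const θ
  have hv : HasFDerivAt (fun y => ε • (grad u y + u y • θ))
      (ε • ((ContinuousLinearMap.pi (fun i => H.flip (Pi.single i 1)))
        + F.smulRight θ)) x := (hgrad.add hsm).const_smul ε
  have hfd := hv.fderiv
  have key : ∀ w k, fderiv ℝ (fun y => ε • (grad u y + u y • θ)) x w k
      = ε * (H w (Pi.single k 1) + F w * θ k) := by
    intro w k
    rw [hfd]
    simp [ContinuousLinearMap.flip_apply, mul_add]
  funext k
  simp only [curl, Pi.add_apply, Pi.smul_apply, Pi.zero_apply, smul_eq_mul]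
  fin_cases k <;>
    simp only [key, crossProduct, LinearMap.mk₂_apply, grad,
      Matrix.cons_val_zero, Matrix.cons_val_one, Matrix.head_cons,
      Matrix.cons_val_two, Matrix.tail_cons, Pi.add_apply, Pi.smul_apply,
      smul_eq_mul, ← hFdef] <;>
    rw [hsymm (Pi.single 1 1) (Pi.single 2 1)] <;> try rw [hsymm (Pi.single 0 1) (Pi.single 2 1)]
  all_goals try rw [hsymm (Pi.single 0 1) (Pi.single 1 1)]
  all_goals simp only [show (⟨0, by norm_num⟩ : Fin 3) = 0 from rfl,
    show (⟨1, by norm_num⟩ : Fin 3) = 1 from rfl,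
    show (⟨2, by norm_num⟩ : Fin 3) = 2 from rfl,
    Matrix.cons_val_zero, Matrix.cons_val_one, Matrix.head_cons,
    Matrix.cons_val_two, Matrix.tail_cons]
  all_goals ring
end

section
/- Let θ ∈ ℝ³ be a constant vector, let ε > 0, and let v : ℝ³ → ℝ³ be twice continuously differentiable on an open set Ω ⊆ ℝ³. Then J²_θ(J¹_θ v) = 0 on Ω, i.e. ε∇·(ε(∇×v + θ×v)) + ε⟨θ, ε(∇×v + θ×v)⟩ = 0 at every point of Ω (the convection–diffusion complex property at the second level of the sequence E_{−θ} ↪ C^∞ →^{J⁰_θ} C^∞ →^{J¹_θ} C^∞ →^{J²_θ} C^∞ → 0). -/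
open Real Matrix

/-- The divergence `∇·v := ∂₁v₁ + ∂₂v₂ + ∂₃v₃` of a vector field on ℝ³. -/
noncomputable def divergence (v : (Fin 3 → ℝ) → (Fin 3 → ℝ)) (x : Fin 3 → ℝ) : ℝ :=
  ∑ i : Fin 3, fderiv ℝ v x (Pi.single i 1) i

/-- **Second-level complex property `J²_θ ∘ J¹_θ = 0`.**
For a constant vector `θ ∈ ℝ³`, `ε > 0`, and `v : ℝ³ → ℝ³` twice continuously
differentiable on an open set `Ω`, with `J¹_θ v := ε • (∇×v + θ × v)`, one has
`ε * ∇·(J¹_θ v) + ε * ⟨θ, J¹_θ v⟩ = 0` at every point of `Ω`. -/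
theorem flux_complex_level_two
    (θ : Fin 3 → ℝ) (ε : ℝ) (hε : 0 < ε)
    (Ω : Set (Fin 3 → ℝ)) (hΩ : IsOpen Ω)
    (v : (Fin 3 → ℝ) → (Fin 3 → ℝ)) (hv : ContDiffOn ℝ 2 v Ω) :
    ∀ x ∈ Ω,
      ε * divergence (fun y => ε • (curl v y + θ ⨯₃ v y)) x
        + ε * (θ ⬝ᵥ (ε • (curl v x + θ ⨯₃ v x))) = 0 := by
  intro x hx
  have hx2 : ContDiffAt ℝ 2 v x := hv.contDiffAt (hΩ.mem_nhds hx)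
  have hvd : DifferentiableAt ℝ v x := hx2.differentiableAt (by norm_num)
  have hf' : DifferentiableAt ℝ (fderiv ℝ v) x := by
    have := hx2.fderiv_right (m := 1) (by norm_num)
    exact this.differentiableAt (by norm_num)
  have hsymm := hx2.isSymmSndFDerivAt (by norm_num)
  have hA : ∀ (u : Fin 3 → ℝ) (k : Fin 3), HasFDerivAt (fun y => fderiv ℝ v y u k)
      ((ContinuousLinearMap.proj k).comp
        ((ContinuousLinearMap.apply ℝ (Fin 3 → ℝ) u).comp (fderiv ℝ (fderiv ℝ v) x))) x := by
    intro u k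
    simpa [Function.comp_def] using (ContinuousLinearMap.proj k).hasFDerivAt.comp x
      ((ContinuousLinearMap.apply ℝ (Fin 3 → ℝ) u).hasFDerivAt.comp x hf'.hasFDerivAt)
  have hV : ∀ k, HasFDerivAt (fun y => v y k)
      ((ContinuousLinearMap.proj k).comp (fderiv ℝ v x)) x := by
    intro k
    simpa [Function.comp_def] using
      (ContinuousLinearMap.proj k).hasFDerivAt.comp x hvd.hasFDerivAt
  set B := fderiv ℝ (fderiv ℝ v) x with hB
  set L := fderiv ℝ v x with hL
  -- component functions
  have e0 : (fun y => (ε • (curl v y + θ ⨯₃ v y)) 0)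
      = fun y => ε * (fderiv ℝ v y (Pi.single 1 1) 2 - fderiv ℝ v y (Pi.single 2 1) 1
          + (θ 1 * v y 2 - θ 2 * v y 1)) := by
    funext y; simp [curl, cross_apply]
  have e1 : (fun y => (ε • (curl v y + θ ⨯₃ v y)) 1)
      = fun y => ε * (fderiv ℝ v y (Pi.single 2 1) 0 - fderiv ℝ v y (Pi.single 0 1) 2
          + (θ 2 * v y 0 - θ 0 * v y 2)) := by
    funext y; simp [curl, cross_apply]
  have e2 : (fun y => (ε • (curl v y + θ ⨯₃ v y)) 2)
      = fun y => ε * (fderiv ℝ v y (Pi.single 0 1) 1 - fderiv ℝ v y (Pi.single 1 1) 0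
          + (θ 0 * v y 1 - θ 1 * v y 0)) := by
    funext y; simp [curl, cross_apply]
  have H0 := ((((hA (Pi.single 1 1) 2).sub (hA (Pi.single 2 1) 1)).add
      (((hV 2).const_mul (θ 1)).sub ((hV 1).const_mul (θ 2)))).const_mul ε)
  have H1 := ((((hA (Pi.single 2 1) 0).sub (hA (Pi.single 0 1) 2)).add
      (((hV 0).const_mul (θ 2)).sub ((hV 2).const_mul (θ 0)))).const_mul ε)
  have H2 := ((((hA (Pi.single 0 1) 1).sub (hA (Pi.single 1 1) 0)).add
      (((hV 1).const_mul (θ 0)).sub ((hV 0).const_mul (θ 1)))).const_mul ε)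
  have hdiff : ∀ i, DifferentiableAt ℝ (fun y => (ε • (curl v y + θ ⨯₃ v y)) i) x := by
    intro i
    fin_cases i
    · show DifferentiableAt ℝ (fun y => (ε • (curl v y + θ ⨯₃ v y)) 0) x
      rw [e0]; exact H0.differentiableAt
    · show DifferentiableAt ℝ (fun y => (ε • (curl v y + θ ⨯₃ v y)) 1) x
      rw [e1]; exact H1.differentiableAt
    · show DifferentiableAt ℝ (fun y => (ε • (curl v y + θ ⨯₃ v y)) 2) x
      rw [e2]; exact H2.differentiableAt
  have hpi : fderiv ℝ (fun y => ε • (curl v y + θ ⨯₃ v y)) x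
      = ContinuousLinearMap.pi fun i => fderiv ℝ (fun y => (ε • (curl v y + θ ⨯₃ v y)) i) x :=
    fderiv_pi hdiff
  have hcomp : ∀ (u : Fin 3 → ℝ) (i : Fin 3),
      fderiv ℝ (fun y => ε • (curl v y + θ ⨯₃ v y)) x u i
        = fderiv ℝ (fun y => (ε • (curl v y + θ ⨯₃ v y)) i) x u := by
    intro u i; rw [hpi]; simp
  have S : ∀ i j k : Fin 3, B (Pi.single i 1) (Pi.single j 1) k
      = B (Pi.single j 1) (Pi.single i 1) k :=
    fun i j k => congrFun (hsymm _ _) k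
  rw [divergence, Fin.sum_univ_three]
  rw [hcomp, hcomp, hcomp, e0, e1, e2]
  erw [H0.fderiv, H1.fderiv, H2.fderiv]
  simp only [ContinuousLinearMap.smul_apply, ContinuousLinearMap.add_apply,
    ContinuousLinearMap.sub_apply, ContinuousLinearMap.comp_apply,
    ContinuousLinearMap.proj_apply, ContinuousLinearMap.apply_apply, smul_eq_mul,
    Pi.smul_apply, Pi.sub_apply]
  rw [show (θ ⬝ᵥ (ε • (curl v x + θ ⨯₃ v x))) = θ ⬝ᵥ (ε • (curl v x + θ ⨯₃ v x)) from rfl]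
  simp only [dotProduct, Fin.sum_univ_three, Pi.smul_apply, Pi.add_apply, smul_eq_mul,
    curl, cross_apply, Matrix.cons_val_zero, Matrix.cons_val_one, Matrix.head_cons,
    Matrix.cons_val_two, Matrix.tail_cons, ← hL]
  linear_combination (ε^2) * S 0 1 2 + (ε^2) * S 1 2 0 + (ε^2) * S 2 0 1
end

section
/- Let x₁,x₂,x₃,x₄ ∈ ℝ³ be affinely independent (i.e. det[x₂−x₁, x₃−x₁, x₄−x₁] ≠ 0), let T be their closed convex hull, and let x ∈ T with barycentric coordinates λ₁,…,λ₄ ≥ 0, Σᵢλᵢ = 1, Σᵢλᵢxᵢ = x. Set lᵢ := xᵢ − x, and given β ∈ ℝ³ set σᵢ := ⟨β, lᵢ⟩. Let ε > 0. Then |det(D^V(x))| = (Σᵢ₌₁⁴ λᵢ B₁^ε(σᵢ)) · |det[x₂−x₁, x₃−x₁, x₄−x₁]| (the paper writes this as det(D^V(x)) = 6|T|·Σᵢλᵢ B₁^ε(σᵢ), with 6|T| = |det[x₂−x₁, x₃−x₁, x₄−x₁]|). In particular, since B₁^ε is strictly positive, D^V(x) is invertible for every x ∈ T, so the L⁰-spline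 system D^V(x)·(j;φ) = B₁^ε(−σ₁)·(1,0,0,0)ᵀ has a unique solution (j,φ) ∈ ℝ³×ℝ. -/
open Real Matrix

noncomputable def B1 (ε σ : ℝ) : ℝ := ε / ∫ x in (0:ℝ)..1, Real.exp (σ * x / ε)

lemma B1_pos {ε : ℝ} (hε : 0 < ε) (σ : ℝ) : 0 < B1 ε σ := by
  apply div_pos hε
  apply intervalIntegral.intervalIntegral_pos_of_pos_on
  · exact Continuous.intervalIntegrable (by continuity) _ _
  · intro x _; exact Real.exp_pos _
  · norm_num

set_option maxHeartbeats 1000000 in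
/-- **Well-posedness of the `L⁰`-spline system (Problem for `S⁰_{1⁻}`).**
For a nondegenerate tetrahedron with vertices `x₁,…,x₄` and any point `x` of its
closed convex hull with barycentric coordinates `λᵢ`, setting `lᵢ := xᵢ − x`,
`σᵢ := ⟨β, lᵢ⟩`, the matrix `D^V(x)` with rows `(lᵢᵀ, B₁^ε(σᵢ))` satisfies
`|det D^V(x)| = (Σᵢ λᵢ B₁^ε(σᵢ)) · |det[x₂−x₁, x₃−x₁, x₄−x₁]|`; in particular
`D^V(x)` is invertible and the system `D^V(x)·(j;φ) = B₁^ε(−σ₁)·(1,0,0,0)ᵀ`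
has a unique solution. -/
theorem L0_spline_wellposed
    (xv : Fin 4 → (Fin 3 → ℝ))
    (hx : Matrix.det (Matrix.of fun i j : Fin 3 => (xv j.succ - xv 0) i) ≠ 0)
    (x : Fin 3 → ℝ) (lam : Fin 4 → ℝ)
    (hlam0 : ∀ i, 0 ≤ lam i) (hlam1 : ∑ i, lam i = 1)
    (hlamx : ∑ i, lam i • xv i = x)
    (β : Fin 3 → ℝ) (ε : ℝ) (hε : 0 < ε) :
    let l : Fin 4 → (Fin 3 → ℝ) := fun i => xv i - x
    let σ : Fin 4 → ℝ := fun i => β ⬝ᵥ l i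
    let DV : Matrix (Fin 4) (Fin 4) ℝ :=
      Matrix.of fun i c => if h : (c : ℕ) < 3 then l i ⟨c, h⟩ else B1 ε (σ i)
    |DV.det| = (∑ i, lam i * B1 ε (σ i)) *
        |Matrix.det (Matrix.of fun i j : Fin 3 => (xv j.succ - xv 0) i)| ∧
    IsUnit DV.det ∧
    ∃! p : Fin 4 → ℝ, DV.mulVec p = B1 ε (-σ 0) • (Pi.single (0 : Fin 4) (1 : ℝ) : Fin 4 → ℝ) := by
  intro l σ DV
  set N : Matrix (Fin 3) (Fin 3) ℝ := Matrix.of fun i j : Fin 3 => (xv j.succ - xv 0) i with hN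
  set s : ℝ := ∑ i, lam i * B1 ε (σ i) with hs
  have hspos : 0 < s := by
    obtain ⟨i, hi⟩ : ∃ i, 0 < lam i := by
      by_contra h
      push_neg at h
      have : ∀ i, lam i = 0 := fun i => le_antisymm (h i) (hlam0 i)
      simp [this] at hlam1
    exact Finset.sum_pos' (fun j _ => mul_nonneg (hlam0 j) (B1_pos hε _).le)
      ⟨i, Finset.mem_univ i, mul_pos hi (B1_pos hε _)⟩
  have hlc : ∀ c : Fin 3, ∑ i, lam i * l i c = 0 := by
    intro c
    have hx' : ∑ i, lam i * xv i c = x c := by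
      have := congrFun hlamx c
      simpa [Finset.sum_apply] using this
    have : ∑ i, lam i * l i c = (∑ i, lam i * xv i c) - (∑ i, lam i) * x c := by
      simp [l, Finset.sum_sub_distrib, sub_mul, Finset.sum_mul, mul_sub]
    rw [this, hx', hlam1, one_mul, sub_self]
  set w : Fin 4 → ℝ := fun i => B1 ε (σ i) - s with hw
  have hDVsplit : DV = DV.updateCol 3 (fun i => w i + s * 1) := by
    funext i c
    by_cases hc : c = 3
    · subst hc
      simp only [Matrix.updateCol_apply, if_pos rfl, w]
      have h3' : ¬ (((3 : Fin 4) : ℕ) < 3) := by decide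
      simp [DV, Matrix.of_apply, h3']
    · simp [Matrix.updateCol_apply, hc]
  have hdet0 : (DV.updateCol 3 w).det = 0 := by
    rw [← Matrix.exists_vecMul_eq_zero_iff]
    refine ⟨lam, ?_, ?_⟩
    · intro h
      rw [h] at hlam1
      simp at hlam1
    · funext c
      simp only [Matrix.vecMul, dotProduct, Pi.zero_apply]
      fin_cases c
      · simpa [Matrix.updateCol_apply, DV] using hlc 0
      · simpa [Matrix.updateCol_apply, DV] using hlc 1
      · simpa [Matrix.updateCol_apply, DV] using hlc 2
      · have h0 : ∑ i, lam i * w i = 0 := by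
          simp only [w, mul_sub]
          rw [Finset.sum_sub_distrib, ← hs, ← Finset.sum_mul, hlam1, one_mul, sub_self]
        simpa [Matrix.updateCol_apply] using h0
  have hdet1 : (DV.updateCol 3 (fun _ => (1:ℝ))).det = - N.det := by
    have h4 : DV.updateCol 3 (fun _ => (1:ℝ)) =
        !![xv 0 0 - x 0, xv 0 1 - x 1, xv 0 2 - x 2, 1;
           xv 1 0 - x 0, xv 1 1 - x 1, xv 1 2 - x 2, 1;
           xv 2 0 - x 0, xv 2 1 - x 1, xv 2 2 - x 2, 1;
           xv 3 0 - x 0, xv 3 1 - x 1, xv 3 2 - x 2, 1] := by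
      funext i c
      fin_cases i <;> fin_cases c <;>
        simp [Matrix.updateCol_apply, DV, l, Matrix.vecHead, Matrix.vecTail]
    have h3 : N = !![xv 1 0 - xv 0 0, xv 2 0 - xv 0 0, xv 3 0 - xv 0 0;
                     xv 1 1 - xv 0 1, xv 2 1 - xv 0 1, xv 3 1 - xv 0 1;
                     xv 1 2 - xv 0 2, xv 2 2 - xv 0 2, xv 3 2 - xv 0 2] := by
      funext i c
      fin_cases i <;> fin_cases c <;> rfl
    rw [h4, h3]
    simp [Matrix.det_succ_row_zero, Fin.sum_univ_succ, Matrix.det_fin_three, Fin.succAbove,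
      Matrix.vecHead, Matrix.vecTail, Fin.castSucc, Fin.succ, Fin.castAdd, Fin.castLE]
    ring
  have hdetDV : DV.det = s * (- N.det) := by
    conv_lhs => rw [hDVsplit]
    rw [show (fun i => w i + s * 1) = w + (fun _ : Fin 4 => s * 1) from rfl]
    rw [Matrix.det_updateCol_add, hdet0, zero_add]
    have h2 : (fun _ : Fin 4 => s * 1) = s • (fun _ : Fin 4 => (1:ℝ)) := by
      funext i; simp
    rw [h2, Matrix.det_updateCol_smul, hdet1]
  have habs : |DV.det| = s * |N.det| := by
    rw [hdetDV, abs_mul, abs_neg, abs_of_pos hspos]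
  have hunit : IsUnit DV.det := by
    rw [isUnit_iff_ne_zero, hdetDV]
    exact mul_ne_zero hspos.ne' (neg_ne_zero.mpr hx)
  refine ⟨habs, hunit, ?_⟩
  set b : Fin 4 → ℝ := B1 ε (-σ 0) • (Pi.single (0 : Fin 4) (1 : ℝ) : Fin 4 → ℝ) with hb
  refine ⟨DV⁻¹.mulVec b, ?_, ?_⟩
  · show DV *ᵥ (DV⁻¹ *ᵥ b) = b
    rw [Matrix.mulVec_mulVec, Matrix.mul_nonsing_inv _ hunit, Matrix.one_mulVec]
  · intro p hp
    rw [← hp, Matrix.mulVec_mulVec, Matrix.nonsing_inv_mul _ hunit, Matrix.one_mulVec]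
end

section
/- Let x₁,x₂,x₃,x₄ ∈ ℝ³ be affinely independent (i.e. det[x₂−x₁, x₃−x₁, x₄−x₁] ≠ 0), let T be their closed convex hull. Fix 1 ≤ i < j ≤ 4 and 1 ≤ s < t ≤ 4, and let x be any point of the closed segment from x_s to x_t. With lᵢ := xᵢ − x, a fixed β ∈ ℝ³, σᵢ := ⟨β, lᵢ⟩, and ε > 0, the unique solution (j^E,φ) ∈ ℝ³×ℝ³ of D^E(x)·(j^E;φ) = B₂^ε(σⱼ−σᵢ, −σᵢ)·e_{ij} (where e_{ij} is the standard unit vector of ℝ⁶ corresponding to the row (i,j)) satisfies ⟨φ, x_t − x_s⟩ = 1 if (s,t) = (i,j) and ⟨φ, x_t − x_s⟩ = 0 otherwise; equivalently, the tangential component of the H(curl) basis function φ^E_{ij} along the edge E_{st} equals δ_{is}δ_{jt}/|E_{st}| at every point of that edge (edge degrees of freedom of the exponentially-fitted space S¹_{1⁻}(T)). -/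
open Real Matrix

/-- The 2D Bernoulli function
`B₂^ε(σ₁,σ₂) := ε·∫₀¹ exp(σ₁x₁/ε) dx₁ / (2∫₀¹∫₀^{1−x₂} exp((σ₁x₁+σ₂x₂)/ε) dx₁dx₂)`. -/
noncomputable def B2 (ε σ₁ σ₂ : ℝ) : ℝ :=
  ε * (∫ x in (0:ℝ)..1, Real.exp (σ₁ * x / ε)) /
    (2 * ∫ x₂ in (0:ℝ)..1, ∫ x₁ in (0:ℝ)..(1 - x₂),
      Real.exp ((σ₁ * x₁ + σ₂ * x₂) / ε))

/-- The six edges `(s,t)`, `s < t`, of a tetrahedron, in lexicographic order. -/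
def edgePair : Fin 6 → Fin 4 × Fin 4 := ![(0,1), (0,2), (0,3), (1,2), (1,3), (2,3)]


open intervalIntegral
section Aux

noncomputable def Faux (ε σ u : ℝ) : ℝ := ∫ x in (0:ℝ)..u, Real.exp (σ * x / ε)

noncomputable def Dint (ε p q : ℝ) : ℝ :=
  ∫ y in (0:ℝ)..1, ∫ x in (0:ℝ)..(1 - y), Real.exp ((p * x + q * y) / ε)

lemma contExp (ε σ : ℝ) : Continuous fun x : ℝ => Real.exp (σ * x / ε) := by
  fun_prop

lemma Faux_continuous (ε σ : ℝ) : Continuous (Faux ε σ) :=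
  intervalIntegral.continuous_primitive (fun a b => (contExp ε σ).intervalIntegrable a b) 0

lemma Faux_pos (ε σ : ℝ) {u : ℝ} (hu : 0 < u) : 0 < Faux ε σ u :=
  intervalIntegral_pos_of_pos ((contExp ε σ).intervalIntegrable 0 u)
    (fun x => Real.exp_pos _) hu

lemma Faux_hasDerivAt (ε σ u : ℝ) : HasDerivAt (Faux ε σ) (Real.exp (σ * u / ε)) u :=
  intervalIntegral.integral_hasDerivAt_right ((contExp ε σ).intervalIntegrable 0 u)
    ((contExp ε σ).stronglyMeasurable.stronglyMeasurableAtFilter) (contExp ε σ).continuousAt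

lemma Dint_eq (ε p q : ℝ) :
    Dint ε p q = ∫ y in (0:ℝ)..1, Real.exp (q * y / ε) * Faux ε p (1 - y) := by
  unfold Dint Faux
  apply intervalIntegral.integral_congr
  intro y _
  dsimp only
  rw [← intervalIntegral.integral_const_mul]
  apply intervalIntegral.integral_congr
  intro x _
  dsimp only
  rw [← Real.exp_add]
  congr 1
  ring

lemma Dint_pos (ε p q : ℝ) : 0 < Dint ε p q := by
  rw [Dint_eq]
  apply intervalIntegral_pos_of_pos_on
  · exact (((contExp ε q).mul ((Faux_continuous ε p).comp
      (continuous_const.sub continuous_id))).intervalIntegrable 0 1)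
  · intro y hy
    exact mul_pos (Real.exp_pos _) (Faux_pos ε p (by simp [Set.mem_Ioo] at hy; linarith))
  · norm_num

lemma Dint_symm (ε p q : ℝ) : Dint ε p q = Dint ε q p := by
  rw [Dint_eq, Dint_eq]
  have hderiv : ∀ y ∈ Set.uIcc (0:ℝ) 1,
      HasDerivAt (fun y => Faux ε p (1 - y)) (-Real.exp (p * (1 - y) / ε)) y := by
    intro y _
    have h1 := (Faux_hasDerivAt ε p (1 - y)).comp y
      ((hasDerivAt_id y).const_sub 1)
    simp only [mul_neg, mul_one] at h1
    exact h1
  have hIBP := intervalIntegral.integral_mul_deriv_eq_deriv_mul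
    (u := Faux ε q) (u' := fun y => Real.exp (q * y / ε))
    (v := fun y => Faux ε p (1 - y)) (v' := fun y => -Real.exp (p * (1 - y) / ε))
    (a := 0) (b := 1)
    (fun y _ => Faux_hasDerivAt ε q y) hderiv
    ((contExp ε q).intervalIntegrable 0 1)
    (((contExp ε p).comp (continuous_const.sub continuous_id)).neg.intervalIntegrable 0 1)
  -- hIBP : ∫ y in 0..1, Faux ε q y * -exp (p (1-y)/ε) = Faux ε q 1 * Faux ε p (1-1) - Faux ε q 0 * Faux ε p (1-0) - ∫ y in 0..1, exp (q y/ε) * Faux ε p (1-y)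
  have hq0 : Faux ε q 0 = 0 := intervalIntegral.integral_same
  have hp0 : Faux ε p (1 - 1) = 0 := by
    norm_num [Faux, intervalIntegral.integral_same]
  rw [hq0, hp0] at hIBP
  simp only [mul_zero, zero_mul, zero_sub] at hIBP
  have step1 : (∫ y in (0:ℝ)..1, Real.exp (q * y / ε) * Faux ε p (1 - y))
      = ∫ y in (0:ℝ)..1, Faux ε q y * Real.exp (p * (1 - y) / ε) := by
    have := hIBP
    simp only [mul_neg] at this
    rw [intervalIntegral.integral_neg] at this
    linarith [this]
  rw [step1]
  have step2 := intervalIntegral.integral_comp_sub_left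
    (fun y => Faux ε q y * Real.exp (p * (1 - y) / ε)) 1 (a := 0) (b := 1)
  norm_num at step2
  rw [← step2]
  apply intervalIntegral.integral_congr
  intro y _
  dsimp only
  norm_num [mul_comm]

lemma Dint_shift (ε p q : ℝ) : Dint ε p q = Real.exp (p / ε) * Dint ε (-p) (q - p) := by
  unfold Dint
  rw [← intervalIntegral.integral_const_mul]
  apply intervalIntegral.integral_congr
  intro y _
  dsimp only
  rw [← intervalIntegral.integral_const_mul]
  have h1 : (∫ x in (0:ℝ)..(1 - y), Real.exp ((p * x + q * y) / ε))
      = ∫ x in (0:ℝ)..(1 - y), Real.exp ((p * ((1 - y) - x) + q * y) / ε) := by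
    rw [intervalIntegral.integral_comp_sub_left
      (fun x => Real.exp ((p * x + q * y) / ε)) (1 - y)]
    norm_num
  rw [h1]
  apply intervalIntegral.integral_congr
  intro x _
  dsimp only
  rw [← Real.exp_add]
  congr 1
  ring

lemma Gaux (ε κ c : ℝ) :
    c * Faux ε (c * κ) 1 = ∫ x in (0:ℝ)..c, Real.exp (κ * x / ε) := by
  unfold Faux
  have h := intervalIntegral.smul_integral_comp_mul_right
    (fun x => Real.exp (κ * x / ε)) (a := 0) (b := 1) c
  norm_num at h
  rw [← h]
  congr 1
  apply intervalIntegral.integral_congr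
  intro x _
  dsimp only
  congr 1
  ring

lemma numerator_id (ε a b κ : ℝ) (hab : a + b = 1) :
    b * Faux ε (-(b * κ)) 1 + a * Faux ε (a * κ) 1
      = Real.exp (-(b * κ) / ε) * Faux ε κ 1 := by
  have h1 : b * Faux ε (-(b * κ)) 1 = ∫ x in (-b:ℝ)..0, Real.exp (κ * x / ε) := by
    have := Gaux ε κ (-b)
    simp only [neg_mul] at this
    rw [intervalIntegral.integral_symm]
    linarith [this]
  have h2 : a * Faux ε (a * κ) 1 = ∫ x in (0:ℝ)..a, Real.exp (κ * x / ε) := Gaux ε κ a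
  rw [h1, h2]
  rw [intervalIntegral.integral_add_adjacent_intervals
    ((contExp ε κ).intervalIntegrable (-b) 0) ((contExp ε κ).intervalIntegrable 0 a)]
  have h3 : Real.exp (-(b * κ) / ε) * Faux ε κ 1
      = ∫ x in (0:ℝ)..1, Real.exp (κ * (x - b) / ε) := by
    unfold Faux
    rw [← intervalIntegral.integral_const_mul]
    apply intervalIntegral.integral_congr
    intro x _
    dsimp only
    rw [← Real.exp_add]
    congr 1
    ring
  rw [h3]
  rw [intervalIntegral.integral_comp_sub_right (fun x => Real.exp (κ * x / ε)) b]
  norm_num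
  congr 1
  linarith

lemma denom_id (ε a b κ : ℝ) (hab : a + b = 1) :
    Dint ε (a * κ) (-(b * κ)) = Real.exp (-(b * κ) / ε) * Dint ε κ (b * κ) := by
  have e1 : -(b * κ) - a * κ = -κ := by linear_combination (-κ) * hab
  have e2 : b * κ - κ = -(a * κ) := by linear_combination κ * hab
  rw [Dint_shift ε (a * κ) (-(b * κ)), e1, Dint_shift ε κ (b * κ), e2,
    Dint_symm ε (-(a * κ)) (-κ), ← mul_assoc, ← Real.exp_add, ← add_div]
  have e3 : -(b * κ) + κ = a * κ := by linear_combination (-κ) * hab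
  rw [e3]

lemma B2_eq (ε σ₁ σ₂ : ℝ) : B2 ε σ₁ σ₂ = ε * Faux ε σ₁ 1 / (2 * Dint ε σ₁ σ₂) := rfl

lemma B2_pos (ε σ₁ σ₂ : ℝ) (hε : 0 < ε) : 0 < B2 ε σ₁ σ₂ := by
  rw [B2_eq]
  exact div_pos (mul_pos hε (Faux_pos ε σ₁ one_pos))
    (mul_pos two_pos (Dint_pos ε σ₁ σ₂))

lemma key_identity (ε a b κ : ℝ) (hab : a + b = 1) :
    b * B2 ε (-(b * κ)) (a * κ) + a * B2 ε (a * κ) (-(b * κ)) = B2 ε κ (b * κ) := by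
  rw [B2_eq, B2_eq, B2_eq, Dint_symm ε (-(b * κ)) (a * κ), denom_id ε a b κ hab]
  set F1 := Faux ε (-(b * κ)) 1
  set F2 := Faux ε (a * κ) 1
  set Fκ := Faux ε κ 1
  set D := Dint ε κ (b * κ) with hD
  set E := Real.exp (-(b * κ) / ε) with hE
  have hn : b * F1 + a * F2 = E * Fκ := numerator_id ε a b κ hab
  have hDpos : 0 < D := Dint_pos ε κ (b * κ)
  have hEpos : 0 < E := Real.exp_pos _
  have hcomb : b * (ε * F1 / (2 * (E * D))) + a * (ε * F2 / (2 * (E * D)))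
      = ε * (b * F1 + a * F2) / (2 * (E * D)) := by ring
  rw [hcomb, hn]
  rw [div_eq_div_iff (by positivity) (by positivity)]
  ring

end Aux

/-- **Edge degrees of freedom of the exponentially-fitted space `S¹_{1⁻}(T)`.**
For `x` on the closed edge from `x_s` to `x_t`, every solution `(j^E;φ)` of the
`L¹`-spline system `D^E(x)·(j^E;φ) = B₂^ε(σⱼ−σᵢ, −σᵢ)·e_{ij}` satisfies
`⟨φ, x_t − x_s⟩ = δ_{is}δ_{jt}`; i.e. the tangential component of the basis
function `φ^E_{ij}` along the edge `E_{st}` equals `δ_{is}δ_{jt}/|E_{st}|`. -/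
theorem L1_spline_edge_dofs
    (xv : Fin 4 → (Fin 3 → ℝ))
    (hx : Matrix.det (Matrix.of fun i j : Fin 3 => (xv j.succ - xv 0) i) ≠ 0)
    (i j s t : Fin 4) (hij : i < j) (hst : s < t)
    (x : Fin 3 → ℝ) (hxseg : x ∈ segment ℝ (xv s) (xv t))
    (β : Fin 3 → ℝ) (ε : ℝ) (hε : 0 < ε) :
    let l : Fin 4 → (Fin 3 → ℝ) := fun k => xv k - x
    let σ : Fin 4 → ℝ := fun k => β ⬝ᵥ l k
    let DE : Matrix (Fin 6) (Fin 6) ℝ :=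
      Matrix.of fun r c =>
        if h : (c : ℕ) < 3 then
          (l (edgePair r).1 ⨯₃ l (edgePair r).2) ⟨c, h⟩ / 2
        else
          -B2 ε (σ (edgePair r).1) (σ (edgePair r).2) *
              l (edgePair r).1 ⟨(c : ℕ) - 3, by omega⟩
            + B2 ε (σ (edgePair r).2) (σ (edgePair r).1) *
              l (edgePair r).2 ⟨(c : ℕ) - 3, by omega⟩
    ∀ p : Fin 6 → ℝ,
      DE.mulVec p =
        B2 ε (σ j - σ i) (-σ i) •
          (fun r : Fin 6 => if edgePair r = (i, j) then (1 : ℝ) else 0) →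
      (fun c : Fin 3 => p ⟨(c : ℕ) + 3, by omega⟩) ⬝ᵥ (xv t - xv s)
        = if i = s ∧ j = t then 1 else 0 := by
  intro l σ DE p hp
  obtain ⟨a, b, ha, hb, hab, hxab⟩ := hxseg
  set e : Fin 3 → ℝ := xv t - xv s with he
  set κ : ℝ := β ⬝ᵥ e with hκ
  have hxk : ∀ k, a * xv s k + b * xv t k = x k := by
    intro k
    have := congrFun hxab k
    simpa using this
  have hls : l s = (-b) • e := by
    funext k
    simp only [l, he, Pi.sub_apply, Pi.smul_apply, smul_eq_mul]
    linear_combination (-(xv s k)) * hab + hxk k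
  have hlt : l t = a • e := by
    funext k
    simp only [l, he, Pi.sub_apply, Pi.smul_apply, smul_eq_mul]
    linear_combination (-(xv t k)) * hab + hxk k
  have hσs : σ s = -(b * κ) := by
    simp only [σ, hls, hκ, dotProduct_smul, smul_eq_mul]
    ring
  have hσt : σ t = a * κ := by
    simp only [σ, hlt, hκ, dotProduct_smul, smul_eq_mul]
  have hcross : l s ⨯₃ l t = 0 := by
    rw [hls, hlt, cross_apply]
    funext k
    fin_cases k <;> simp <;> ring
  have hex : ∀ s' t' : Fin 4, s' < t' → ∃ r : Fin 6, edgePair r = (s', t') := by decide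
  obtain ⟨r₀, hr₀⟩ := hex s t hst
  have h := congrFun hp r₀
  simp only [Matrix.mulVec, dotProduct, Fin.sum_univ_six, Pi.smul_apply, smul_eq_mul,
    DE, Matrix.of_apply, hr₀, hcross, Pi.zero_apply] at h
  norm_num [show ((3:Fin 6):ℕ) = 3 from rfl, show ((4:Fin 6):ℕ) = 4 from rfl,
    show ((5:Fin 6):ℕ) = 5 from rfl] at h
  rw [hls, hlt, hσs, hσt] at h
  simp only [Pi.smul_apply, smul_eq_mul] at h
  simp only [show (⟨2, by norm_num⟩ : Fin 3) = (2 : Fin 3) from rfl,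
    show (⟨1, by norm_num⟩ : Fin 3) = (1 : Fin 3) from rfl,
    show (⟨0, by norm_num⟩ : Fin 3) = (0 : Fin 3) from rfl] at h
  norm_num [show ((0:Fin 3):ℕ) = 0 from rfl, show ((1:Fin 3):ℕ) = 1 from rfl,
    show ((2:Fin 3):ℕ) = 2 from rfl, dotProduct, Fin.sum_univ_three]
  have hX := B2_pos ε (-(b * κ)) (a * κ) hε
  have hY := B2_pos ε (a * κ) (-(b * κ)) hε
  set X := B2 ε (-(b * κ)) (a * κ) with hXdef
  set Y := B2 ε (a * κ) (-(b * κ)) with hYdef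
  have hC : 0 < b * X + a * Y := by
    rcases ha.lt_or_eq with h' | h'
    · exact add_pos_of_nonneg_of_pos (mul_nonneg hb hX.le) (mul_pos h' hY)
    · have hb1 : b = 1 := by linarith
      rw [← h', hb1]; simpa using hX
  have hkey := key_identity ε a b κ hab
  by_cases hcase : i = s ∧ j = t
  · obtain ⟨hi, hj⟩ := hcase
    subst hi; subst hj
    simp only [and_self, if_true, eq_self_iff_true] at h ⊢
    have harg : σ j - σ i = κ := by rw [hσs, hσt]; linear_combination κ * hab
    have harg2 : -σ i = b * κ := by rw [hσs]; ring
    rw [harg, harg2] at h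
    have hS : (b * X + a * Y) * (p 3 * e 0 + p 4 * e 1 + p 5 * e 2)
        = (b * X + a * Y) * 1 := by
      rw [mul_one]
      linear_combination h - hkey
    exact mul_left_cancel₀ hC.ne' hS
  · have hne : ¬(s = i ∧ t = j) := fun hq => hcase ⟨hq.1.symm, hq.2.symm⟩
    rw [if_neg hne] at h
    rw [if_neg hcase]
    have hS : (b * X + a * Y) * (p 3 * e 0 + p 4 * e 1 + p 5 * e 2)
        = (b * X + a * Y) * 0 := by
      rw [mul_zero]
      linear_combination h
    exact mul_left_cancel₀ hC.ne' hS
end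

section
/- Let x₁,x₂,x₃,x₄ ∈ ℝ³ be affinely independent (i.e. det[x₂−x₁, x₃−x₁, x₄−x₁] ≠ 0). Fix 1 ≤ i < j ≤ 4 and s ∈ {i,j}, let F_s be the closed triangle spanned by the three vertices xₖ with k ≠ s, and let n_s be a unit normal vector of F_s. Let x be any point of F_s. With lᵢ := xᵢ − x, a fixed β ∈ ℝ³, σᵢ := ⟨β, lᵢ⟩, and ε > 0, the unique solution (j^E,φ) ∈ ℝ³×ℝ³ of D^E(x)·(j^E;φ) = B₂^ε(σⱼ−σᵢ, −σᵢ)·e_{ij} (where e_{ij} is the standard unit vector of ℝ⁶ corresponding to the row (i,j)) satisfies n_s × φ = 0; i.e., the tangential trace of the H(curl) basis function φ^E_{ij} vanishes identically on the facet F_s opposite to either endpoint of the edge E_{ij} (the local H(curl)-conformity property of S¹_{1⁻}). -/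
open Real Matrix

lemma v60 : (((0:Fin 6)):ℕ) = 0 := rfl
lemma v61 : (((1:Fin 6)):ℕ) = 1 := rfl
lemma v62 : (((2:Fin 6)):ℕ) = 2 := rfl
lemma v63 : (((3:Fin 6)):ℕ) = 3 := rfl
lemma v64 : (((4:Fin 6)):ℕ) = 4 := rfl
lemma v65 : (((5:Fin 6)):ℕ) = 5 := rfl

lemma f60 (h : (0:ℕ) < 6) : (⟨0, h⟩ : Fin 6) = 0 := rfl
lemma f61 (h : (1:ℕ) < 6) : (⟨1, h⟩ : Fin 6) = 1 := rfl
lemma f62 (h : (2:ℕ) < 6) : (⟨2, h⟩ : Fin 6) = 2 := rfl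
lemma f63 (h : 0+3 < 6) : (⟨0+3, h⟩ : Fin 6) = 3 := rfl
lemma f64 (h : 1+3 < 6) : (⟨1+3, h⟩ : Fin 6) = 4 := rfl
lemma f65 (h : 2+3 < 6) : (⟨2+3, h⟩ : Fin 6) = 5 := rfl
lemma f63' (h : 3 < 6) : (⟨3, h⟩ : Fin 6) = 3 := rfl
lemma f64' (h : 4 < 6) : (⟨4, h⟩ : Fin 6) = 4 := rfl
lemma f65' (h : 5 < 6) : (⟨5, h⟩ : Fin 6) = 5 := rfl
lemma core_alg (D u p q r ta tb tc B1 B2 B3 B4 B5 B6 : ℝ)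
    (h1 : 0 < B1) (h2 : 0 < B2) (h3 : 0 < B3) (h4 : 0 < B4) (h5 : 0 < B5) (h6 : 0 < B6)
    (hta : 0 ≤ ta) (htb : 0 ≤ tb) (htc : 0 ≤ tc) (hsum : ta + tb + tc = 1)
    (E1 : tc * D * u / 2 - B1 * p + B2 * q = 0)
    (E2 : -(tb * D * u) / 2 - B3 * p + B4 * r = 0)
    (E3 : ta * D * u / 2 - B5 * q + B6 * r = 0)
    (E4 : ta * p + tb * q + tc * r = 0) :
    p = 0 ∧ q = 0 ∧ r = 0 := by
  set Δ : ℝ := tb*tc*B1*B5 + tb^2*B1*B6 + ta*tb*B1*B4 + tc^2*B3*B5 + tb*tc*B3*B6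
      + ta*tc*B2*B3 + ta*tc*B4*B5 + ta*tb*B2*B6 + ta^2*B2*B4 with hΔdef
  have hΔ : 0 < Δ := by
    have n1 : 0 ≤ tb*tc*B1*B5 := by positivity
    have n2 : 0 ≤ tb^2*B1*B6 := by positivity
    have n3 : 0 ≤ ta*tb*B1*B4 := by positivity
    have n4 : 0 ≤ tc^2*B3*B5 := by positivity
    have n5 : 0 ≤ tb*tc*B3*B6 := by positivity
    have n6 : 0 ≤ ta*tc*B2*B3 := by positivity
    have n7 : 0 ≤ ta*tc*B4*B5 := by positivity
    have n8 : 0 ≤ ta*tb*B2*B6 := by positivity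
    have n9 : 0 ≤ ta^2*B2*B4 := by positivity
    have htri : 1/3 ≤ ta ∨ 1/3 ≤ tb ∨ 1/3 ≤ tc := by
      by_contra h; push_neg at h; linarith [h.1, h.2.1, h.2.2]
    rcases htri with h | h | h
    · have hpos : 0 < ta := by linarith
      have : 0 < ta^2*B2*B4 := by positivity
      rw [hΔdef]; linarith
    · have hpos : 0 < tb := by linarith
      have : 0 < tb^2*B1*B6 := by positivity
      rw [hΔdef]; linarith
    · have hpos : 0 < tc := by linarith
      have : 0 < tc^2*B3*B5 := by positivity
      rw [hΔdef]; linarith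
  have hp : Δ * p = 0 := by
    linear_combination (-(tb*(tc*B5 + tb*B6 + ta*B4))) * E1
      + (-(tc*(tc*B5 + tb*B6 + ta*B2))) * E2
      + (-(tb*tc*(B2 - B4))) * E3
      + (tc*B4*B5 + tb*B2*B6 + ta*B2*B4) * E4
  have hq : Δ * q = 0 := by
    linear_combination (ta*(tb*B6 + tc*B3 + ta*B4)) * E1
      + (-(ta*tc*(B1 - B6))) * E2
      + (-(tc*(tc*B3 + ta*B4 + tb*B1))) * E3
      + (tc*B3*B6 + tb*B1*B6 + ta*B1*B4) * E4
  have hr : Δ * r = 0 := by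
    linear_combination (-(ta*tb*(B3 - B5))) * E1
      + (ta*(tc*B5 + tb*B1 + ta*B2)) * E2
      + (tb*(tc*B3 + tb*B1 + ta*B2)) * E3
      + (tc*B3*B5 + tb*B1*B5 + ta*B2*B3) * E4
  refine ⟨?_, ?_, ?_⟩ <;>
    [skip; skip; skip] <;>
    first
      | exact (mul_eq_zero.1 hp).resolve_left hΔ.ne'
      | exact (mul_eq_zero.1 hq).resolve_left hΔ.ne'
      | exact (mul_eq_zero.1 hr).resolve_left hΔ.ne'


lemma fin3_mk0 (h : 0 < 3) : (⟨0, h⟩ : Fin 3) = 0 := rfl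
lemma fin3_mk1 (h : 1 < 3) : (⟨1, h⟩ : Fin 3) = 1 := rfl
lemma fin3_mk2 (h : 2 < 3) : (⟨2, h⟩ : Fin 3) = 2 := rfl

lemma cross_eq_smul_normal (n a b : Fin 3 → ℝ) (ha : n ⬝ᵥ a = 0) (hb : n ⬝ᵥ b = 0)
    (hn : ∑ c, n c ^ 2 = 1) : a ⨯₃ b = (n ⬝ᵥ (a ⨯₃ b)) • n := by
  simp only [dotProduct, Fin.sum_univ_three, crossProduct, LinearMap.mk₂_apply,
    Matrix.cons_val_zero, Matrix.cons_val_one, Matrix.head_cons, Matrix.cons_val_two,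
    Matrix.tail_cons] at ha hb hn ⊢
  funext c
  fin_cases c <;>
    simp only [Pi.smul_apply, smul_eq_mul, Matrix.cons_val_zero, Matrix.cons_val_one,
      Matrix.head_cons, Matrix.cons_val_two, Matrix.tail_cons, fin3_mk0, fin3_mk1, fin3_mk2]
  · linear_combination (n 1 * b 2 - n 2 * b 1) * ha - (n 1 * a 2 - n 2 * a 1) * hb
      - (a 1 * b 2 - a 2 * b 1) * hn
  · linear_combination (n 2 * b 0 - n 0 * b 2) * ha - (n 2 * a 0 - n 0 * a 2) * hb
      - (a 2 * b 0 - a 0 * b 2) * hn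
  · linear_combination (n 0 * b 1 - n 1 * b 0) * ha - (n 0 * a 1 - n 1 * a 0) * hb
      - (a 0 * b 1 - a 1 * b 0) * hn

lemma span3 (v1 v2 v3 w : Fin 3 → ℝ) (hdet : v1 ⬝ᵥ (v2 ⨯₃ v3) ≠ 0)
    (h1 : v1 ⬝ᵥ w = 0) (h2 : v2 ⬝ᵥ w = 0) (h3 : v3 ⬝ᵥ w = 0) : w = 0 := by
  simp only [dotProduct, Fin.sum_univ_three, crossProduct, LinearMap.mk₂_apply,
    Matrix.cons_val_zero, Matrix.cons_val_one, Matrix.head_cons, Matrix.cons_val_two,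
    Matrix.tail_cons] at hdet h1 h2 h3
  funext c
  have key : (v1 0 * (v2 1 * v3 2 - v2 2 * v3 1) + v1 1 * (v2 2 * v3 0 - v2 0 * v3 2)
      + v1 2 * (v2 0 * v3 1 - v2 1 * v3 0)) * w c = 0 := by
    fin_cases c <;> simp only [fin3_mk0, fin3_mk1, fin3_mk2]
    · linear_combination (v2 1 * v3 2 - v2 2 * v3 1) * h1 + (v3 1 * v1 2 - v3 2 * v1 1) * h2
        + (v1 1 * v2 2 - v1 2 * v2 1) * h3
    · linear_combination (v2 2 * v3 0 - v2 0 * v3 2) * h1 + (v3 2 * v1 0 - v3 0 * v1 2) * h2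
        + (v1 2 * v2 0 - v1 0 * v2 2) * h3
    · linear_combination (v2 0 * v3 1 - v2 1 * v3 0) * h1 + (v3 0 * v1 1 - v3 1 * v1 0) * h2
        + (v1 0 * v2 1 - v1 1 * v2 0) * h3
  have := mul_eq_zero.1 key
  simpa [hdet] using this.resolve_left hdet

section ids
variable (va vb vc w : Fin 3 → ℝ) (tb tc : ℝ)

lemma expand_simp : ∀ y z : Fin 3 → ℝ,
    (y ⨯₃ z) ⬝ᵥ w = (y 1 * z 2 - y 2 * z 1) * w 0 + (y 2 * z 0 - y 0 * z 2) * w 1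
      + (y 0 * z 1 - y 1 * z 0) * w 2 := by
  intro y z
  simp only [crossProduct, dotProduct, Fin.sum_univ_three, LinearMap.mk₂_apply,
    Matrix.cons_val_zero, Matrix.cons_val_one, Matrix.head_cons, Matrix.cons_val_two,
    Matrix.tail_cons]
  try ring

lemma lambda_ab :
    ((va - ((1-tb-tc) • va + tb • vb + tc • vc)) ⨯₃ (vb - ((1-tb-tc) • va + tb • vb + tc • vc))) ⬝ᵥ w
      = tc * (((vb - va) ⨯₃ (vc - va)) ⬝ᵥ w) := by
  rw [expand_simp, expand_simp]
  simp only [Pi.sub_apply, Pi.add_apply, Pi.smul_apply, smul_eq_mul]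
  ring

lemma lambda_ac :
    ((va - ((1-tb-tc) • va + tb • vb + tc • vc)) ⨯₃ (vc - ((1-tb-tc) • va + tb • vb + tc • vc))) ⬝ᵥ w
      = -tb * (((vb - va) ⨯₃ (vc - va)) ⬝ᵥ w) := by
  rw [expand_simp, expand_simp]
  simp only [Pi.sub_apply, Pi.add_apply, Pi.smul_apply, smul_eq_mul]
  ring

lemma lambda_bc :
    ((vb - ((1-tb-tc) • va + tb • vb + tc • vc)) ⨯₃ (vc - ((1-tb-tc) • va + tb • vb + tc • vc))) ⬝ᵥ w
      = (1-tb-tc) * (((vb - va) ⨯₃ (vc - va)) ⬝ᵥ w) := by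
  rw [expand_simp, expand_simp]
  simp only [Pi.sub_apply, Pi.add_apply, Pi.smul_apply, smul_eq_mul]
  ring

lemma e4_id :
    (1-tb-tc) * ((va - ((1-tb-tc) • va + tb • vb + tc • vc)) ⬝ᵥ w)
      + tb * ((vb - ((1-tb-tc) • va + tb • vb + tc • vc)) ⬝ᵥ w)
      + tc * ((vc - ((1-tb-tc) • va + tb • vb + tc • vc)) ⬝ᵥ w) = 0 := by
  simp only [dotProduct, Fin.sum_univ_three, Pi.sub_apply, Pi.add_apply, Pi.smul_apply,
    smul_eq_mul]
  ring

end ids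

lemma facet_core (xv : Fin 4 → Fin 3 → ℝ) (a b c : Fin 4) (x n φ jv : Fin 3 → ℝ)
    (ta tb tc : ℝ) (h0a : 0 ≤ ta) (h0b : 0 ≤ tb) (h0c : 0 ≤ tc) (hsum : ta + tb + tc = 1)
    (hxeq : x = ta • xv a + tb • xv b + tc • xv c)
    (hd1 : n ⬝ᵥ (xv b - xv a) = 0) (hd2 : n ⬝ᵥ (xv c - xv a) = 0)
    (hnu : ∑ i, n i ^ 2 = 1)
    (hD : n ⬝ᵥ ((xv b - xv a) ⨯₃ (xv c - xv a)) ≠ 0)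
    (B1 B2 B3 B4 B5 B6 : ℝ)
    (p1 : 0 < B1) (p2 : 0 < B2) (p3 : 0 < B3) (p4 : 0 < B4) (p5 : 0 < B5) (p6 : 0 < B6)
    (Eab : ((xv a - x) ⨯₃ (xv b - x)) ⬝ᵥ jv / 2
      - B1 * ((xv a - x) ⬝ᵥ φ) + B2 * ((xv b - x) ⬝ᵥ φ) = 0)
    (Eac : ((xv a - x) ⨯₃ (xv c - x)) ⬝ᵥ jv / 2
      - B3 * ((xv a - x) ⬝ᵥ φ) + B4 * ((xv c - x) ⬝ᵥ φ) = 0)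
    (Ebc : ((xv b - x) ⨯₃ (xv c - x)) ⬝ᵥ jv / 2
      - B5 * ((xv b - x) ⬝ᵥ φ) + B6 * ((xv c - x) ⬝ᵥ φ) = 0) :
    n ⨯₃ φ = 0 := by
  have hta : ta = 1 - tb - tc := by linarith
  subst hta
  subst hxeq
  have hcross : (xv b - xv a) ⨯₃ (xv c - xv a)
      = (n ⬝ᵥ ((xv b - xv a) ⨯₃ (xv c - xv a))) • n :=
    cross_eq_smul_normal n _ _ hd1 hd2 hnu
  have crossD : ((xv b - xv a) ⨯₃ (xv c - xv a)) ⬝ᵥ jv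
      = (n ⬝ᵥ ((xv b - xv a) ⨯₃ (xv c - xv a))) * (n ⬝ᵥ jv) := by
    conv_lhs => rw [hcross]
    rw [smul_dotProduct]; rfl
  rw [lambda_ab, crossD] at Eab
  rw [lambda_ac, crossD] at Eac
  rw [lambda_bc, crossD] at Ebc
  obtain ⟨hP, hQ, hR⟩ :=
    core_alg (n ⬝ᵥ ((xv b - xv a) ⨯₃ (xv c - xv a))) (n ⬝ᵥ jv) _ _ _ _ _ _
      B1 B2 B3 B4 B5 B6 p1 p2 p3 p4 p5 p6 h0a h0b h0c (by ring)
      (by linear_combination Eab) (by linear_combination Eac) (by linear_combination Ebc)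
      (e4_id (xv a) (xv b) (xv c) φ tb tc)
  -- tangential components of φ vanish
  have hT1 : (xv b - xv a) ⬝ᵥ φ = 0 := by
    rw [show xv b - xv a = (xv b - ((1-tb-tc) • xv a + tb • xv b + tc • xv c))
        - (xv a - ((1-tb-tc) • xv a + tb • xv b + tc • xv c)) from
      (sub_sub_sub_cancel_right _ _ _).symm, sub_dotProduct, hP, hQ, sub_zero]
  have hT2 : (xv c - xv a) ⬝ᵥ φ = 0 := by
    rw [show xv c - xv a = (xv c - ((1-tb-tc) • xv a + tb • xv b + tc • xv c))
        - (xv a - ((1-tb-tc) • xv a + tb • xv b + tc • xv c)) from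
      (sub_sub_sub_cancel_right _ _ _).symm, sub_dotProduct, hP, hR, sub_zero]
  have hnn : n ⬝ᵥ n = 1 := by
    rw [show n ⬝ᵥ n = ∑ i, n i ^ 2 by simp [dotProduct, sq], hnu]
  have hw : φ - (n ⬝ᵥ φ) • n = 0 := by
    apply span3 n (xv b - xv a) (xv c - xv a) _ hD
    · rw [dotProduct_sub, dotProduct_smul, hnn, smul_eq_mul, mul_one, sub_self]
    · rw [dotProduct_sub, dotProduct_smul, smul_eq_mul, hT1,
        dotProduct_comm _ n, hd1]
      ring
    · rw [dotProduct_sub, dotProduct_smul, smul_eq_mul, hT2,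
        dotProduct_comm _ n, hd2]
      ring
  have hφ : φ = (n ⬝ᵥ φ) • n := by
    have := sub_eq_zero.mp hw
    exact this
  rw [hφ, LinearMap.map_smul, cross_self, smul_zero]

lemma hull3 {E : Type*} [AddCommGroup E] [Module ℝ E] (u v w x : E)
    (hx : x ∈ convexHull ℝ (Set.range ![u, v, w])) :
    ∃ ta tb tc : ℝ, 0 ≤ ta ∧ 0 ≤ tb ∧ 0 ≤ tc ∧ ta + tb + tc = 1
      ∧ x = ta • u + tb • v + tc • w := by
  rw [convexHull_range_eq_exists_affineCombination] at hx
  obtain ⟨t, wt, h0, h1, haff⟩ := hx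
  set W : Fin 3 → ℝ := fun i => if i ∈ t then wt i else 0 with hW
  have key : ∀ f : Fin 3 → E, (∑ i ∈ t, wt i • f i) = ∑ i : Fin 3, W i • f i := by
    intro f
    rw [show (∑ i : Fin 3, W i • f i) = ∑ i ∈ Finset.univ, (if i ∈ t then wt i • f i else 0) by
      apply Finset.sum_congr rfl; intro i _; rw [hW]; dsimp only; rw [ite_smul, zero_smul]]
    rw [Finset.sum_ite_mem, Finset.univ_inter]
  have keyR : (∑ i ∈ t, wt i) = ∑ i : Fin 3, W i := by
    rw [show (∑ i : Fin 3, W i) = ∑ i ∈ Finset.univ, (if i ∈ t then wt i else 0) from rfl]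
    rw [Finset.sum_ite_mem, Finset.univ_inter]
  rw [Finset.affineCombination_eq_linear_combination t _ _ h1] at haff
  refine ⟨W 0, W 1, W 2, ?_, ?_, ?_, ?_, ?_⟩
  · rw [hW]; dsimp only; split_ifs with h; exacts [h0 0 h, le_refl 0]
  · rw [hW]; dsimp only; split_ifs with h; exacts [h0 1 h, le_refl 0]
  · rw [hW]; dsimp only; split_ifs with h; exacts [h0 2 h, le_refl 0]
  · rw [← Fin.sum_univ_three W, ← keyR]; exact h1
  · rw [← haff, key]
    simp [Fin.sum_univ_three]

lemma dot_cross (u v w : Fin 3 → ℝ) : u ⬝ᵥ (v ⨯₃ w)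
    = u 0 * (v 1 * w 2 - v 2 * w 1) + u 1 * (v 2 * w 0 - v 0 * w 2)
      + u 2 * (v 0 * w 1 - v 1 * w 0) := by
  simp only [crossProduct, dotProduct, Fin.sum_univ_three, LinearMap.mk₂_apply,
    Matrix.cons_val_zero, Matrix.cons_val_one, Matrix.head_cons, Matrix.cons_val_two,
    Matrix.tail_cons]

lemma detEq (xv : Fin 4 → Fin 3 → ℝ) :
    Matrix.det (Matrix.of fun i j : Fin 3 => (xv j.succ - xv 0) i)
      = (xv 1 - xv 0) ⬝ᵥ ((xv 2 - xv 0) ⨯₃ (xv 3 - xv 0)) := by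
  rw [Matrix.det_fin_three, dot_cross]
  simp only [Matrix.of_apply, Pi.sub_apply, Fin.succ_zero_eq_one, Fin.succ_one_eq_two,
    show (2 : Fin 3).succ = 3 from rfl]
  ring

/-- **Local H(curl)-conformity of `S¹_{1⁻}`.**
Fix an edge `E_{ij}` (`i < j`) and `s ∈ {i, j}`, let `F_s` be the facet opposite
to vertex `x_s` and `n_s` a unit normal of `F_s`. For any `x ∈ F_s`, every
solution `(j^E;φ)` of `D^E(x)·(j^E;φ) = B₂^ε(σⱼ−σᵢ, −σᵢ)·e_{ij}` satisfies
`n_s × φ = 0`: the tangential trace of `φ^E_{ij}` vanishes on the facets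
opposite to either endpoint of the edge `E_{ij}`. -/
theorem L1_spline_conformity
    (xv : Fin 4 → (Fin 3 → ℝ))
    (hx : Matrix.det (Matrix.of fun i j : Fin 3 => (xv j.succ - xv 0) i) ≠ 0)
    (i j s : Fin 4) (hij : i < j) (hs : s = i ∨ s = j)
    (x : Fin 3 → ℝ)
    (hxF : x ∈ convexHull ℝ (xv '' {k | k ≠ s}))
    (n : Fin 3 → ℝ)
    (hn : ∀ k k' : Fin 4, k ≠ s → k' ≠ s → n ⬝ᵥ (xv k - xv k') = 0)
    (hnunit : ∑ a, n a ^ 2 = 1)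
    (β : Fin 3 → ℝ) (ε : ℝ) (hε : 0 < ε) :
    let l : Fin 4 → (Fin 3 → ℝ) := fun k => xv k - x
    let σ : Fin 4 → ℝ := fun k => β ⬝ᵥ l k
    let DE : Matrix (Fin 6) (Fin 6) ℝ :=
      Matrix.of fun r c =>
        if h : (c : ℕ) < 3 then
          (l (edgePair r).1 ⨯₃ l (edgePair r).2) ⟨c, h⟩ / 2
        else
          -B2 ε (σ (edgePair r).1) (σ (edgePair r).2) *
              l (edgePair r).1 ⟨(c : ℕ) - 3, by omega⟩
            + B2 ε (σ (edgePair r).2) (σ (edgePair r).1) *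
              l (edgePair r).2 ⟨(c : ℕ) - 3, by omega⟩
    ∀ p : Fin 6 → ℝ,
      DE.mulVec p =
        B2 ε (σ j - σ i) (-σ i) •
          (fun r : Fin 6 => if edgePair r = (i, j) then (1 : ℝ) else 0) →
      n ⨯₃ (fun c : Fin 3 => p ⟨(c : ℕ) + 3, by omega⟩) = 0 := by
  intro l σ DE p hp
  have dot3 : ∀ u v : Fin 3 → ℝ, u ⬝ᵥ v = u 0 * v 0 + u 1 * v 1 + u 2 * v 2 := by
    intro u v; simp [dotProduct, Fin.sum_univ_three]
  have hdet' : (xv 1 - xv 0) ⬝ᵥ ((xv 2 - xv 0) ⨯₃ (xv 3 - xv 0)) ≠ 0 := by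
    rw [← detEq]; exact hx
  have hpair : ∀ k l' : Fin 4, k ≠ s → l' ≠ s → ¬((k, l') = (i, j)) := by
    intro k l' hk hl' h
    rw [Prod.mk.injEq] at h
    rcases hs with rfl | rfl
    · exact hk h.1
    · exact hl' h.2
  have rowE : ∀ (A B : Fin 4) (r : Fin 6), edgePair r = (A, B) → ¬((A, B) = (i, j)) →
      ((xv A - x) ⨯₃ (xv B - x)) ⬝ᵥ (fun c : Fin 3 => p ⟨(c : ℕ), by omega⟩) / 2
        - B2 ε (β ⬝ᵥ (xv A - x)) (β ⬝ᵥ (xv B - x)) * ((xv A - x) ⬝ᵥ (fun c : Fin 3 => p ⟨(c : ℕ) + 3, by omega⟩))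
        + B2 ε (β ⬝ᵥ (xv B - x)) (β ⬝ᵥ (xv A - x)) * ((xv B - x) ⬝ᵥ (fun c : Fin 3 => p ⟨(c : ℕ) + 3, by omega⟩)) = 0 := by
    intro A B r hr hne
    have h := congrFun hp r
    rw [Pi.smul_apply, hr, if_neg hne, smul_eq_mul, mul_zero] at h
    rw [Matrix.mulVec, dotProduct, Fin.sum_univ_six] at h
    simp only [DE, Matrix.of_apply, hr, l, σ] at h
    rw [expand_simp, dot3, dot3]
    simp only [v60, v61, v62, v63, v64, v65, Fin.isValue, Fin.val_zero, Fin.val_one,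
      Fin.val_two] at h ⊢
    norm_num [crossProduct, dotProduct, Fin.sum_univ_three, fin3_mk0, fin3_mk1, fin3_mk2,
      f60, f61, f62, f63, f64, f65, f63', f64', f65', Pi.sub_apply, Matrix.cons_val_two,
      Matrix.tail_cons, Matrix.head_cons] at h ⊢
    linear_combination h
  clear hp hx hij
  have hs4 : ∀ t : Fin 4, t = 0 ∨ t = 1 ∨ t = 2 ∨ t = 3 := by decide
  rcases hs4 s with rfl | rfl | rfl | rfl
  · -- s = 0
    have hd1 : n ⬝ᵥ (xv 2 - xv 1) = 0 := hn 2 1 (by decide) (by decide)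
    have hd2 : n ⬝ᵥ (xv 3 - xv 1) = 0 := hn 3 1 (by decide) (by decide)
    have hD : n ⬝ᵥ ((xv 2 - xv 1) ⨯₃ (xv 3 - xv 1)) ≠ 0 := by
      intro h0
      have hc : (xv 2 - xv 1) ⨯₃ (xv 3 - xv 1) = 0 := by
        rw [cross_eq_smul_normal n _ _ hd1 hd2 hnunit, h0, zero_smul]
      apply hdet'
      have h0' : (xv 1 - xv 0) ⬝ᵥ ((xv 2 - xv 1) ⨯₃ (xv 3 - xv 1)) = 0 := by
        rw [hc, dotProduct_zero]
      rw [dot_cross] at h0' ⊢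
      simp only [Pi.sub_apply] at h0' ⊢
      linear_combination h0'
    have hset : xv '' {k | k ≠ (0 : Fin 4)} = Set.range ![xv 1, xv 2, xv 3] := by
      ext y
      constructor
      · rintro ⟨k, hk, rfl⟩
        simp only [Set.mem_setOf_eq] at hk
        fin_cases k
        · exact absurd rfl hk
        · exact ⟨0,rfl⟩
        · exact ⟨1,rfl⟩
        · exact ⟨2,rfl⟩
      · rintro ⟨idx, rfl⟩
        fin_cases idx
        · exact ⟨1, by simp, rfl⟩
        · exact ⟨2, by simp, rfl⟩
        · exact ⟨3, by simp, rfl⟩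
    obtain ⟨ta, tb, tc, h0a, h0b, h0c, hsum, hxeq⟩ :=
      hull3 (xv 1) (xv 2) (xv 3) x (by rw [← hset]; exact hxF)
    refine facet_core xv 1 2 3 x n _ (fun c : Fin 3 => p ⟨(c : ℕ), by omega⟩)
      ta tb tc h0a h0b h0c hsum hxeq hd1 hd2 hnunit hD
      (B2 ε (β ⬝ᵥ (xv 1 - x)) (β ⬝ᵥ (xv 2 - x))) (B2 ε (β ⬝ᵥ (xv 2 - x)) (β ⬝ᵥ (xv 1 - x))) (B2 ε (β ⬝ᵥ (xv 1 - x)) (β ⬝ᵥ (xv 3 - x))) (B2 ε (β ⬝ᵥ (xv 3 - x)) (β ⬝ᵥ (xv 1 - x))) (B2 ε (β ⬝ᵥ (xv 2 - x)) (β ⬝ᵥ (xv 3 - x))) (B2 ε (β ⬝ᵥ (xv 3 - x)) (β ⬝ᵥ (xv 2 - x))) (B2_pos _ _ _ hε) (B2_pos _ _ _ hε) (B2_pos _ _ _ hε)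
      (B2_pos _ _ _ hε) (B2_pos _ _ _ hε) (B2_pos _ _ _ hε) ?_ ?_ ?_
    · exact rowE 1 2 3 rfl (hpair 1 2 (by decide) (by decide))
    · exact rowE 1 3 4 rfl (hpair 1 3 (by decide) (by decide))
    · exact rowE 2 3 5 rfl (hpair 2 3 (by decide) (by decide))
  · -- s = 1
    have hd1 : n ⬝ᵥ (xv 2 - xv 0) = 0 := hn 2 0 (by decide) (by decide)
    have hd2 : n ⬝ᵥ (xv 3 - xv 0) = 0 := hn 3 0 (by decide) (by decide)
    have hD : n ⬝ᵥ ((xv 2 - xv 0) ⨯₃ (xv 3 - xv 0)) ≠ 0 := by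
      intro h0
      have hc : (xv 2 - xv 0) ⨯₃ (xv 3 - xv 0) = 0 := by
        rw [cross_eq_smul_normal n _ _ hd1 hd2 hnunit, h0, zero_smul]
      apply hdet'
      have h0' : (xv 1 - xv 0) ⬝ᵥ ((xv 2 - xv 0) ⨯₃ (xv 3 - xv 0)) = 0 := by
        rw [hc, dotProduct_zero]
      rw [dot_cross] at h0' ⊢
      simp only [Pi.sub_apply] at h0' ⊢
      linear_combination h0'
    have hset : xv '' {k | k ≠ (1 : Fin 4)} = Set.range ![xv 0, xv 2, xv 3] := by
      ext y
      constructor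
      · rintro ⟨k, hk, rfl⟩
        simp only [Set.mem_setOf_eq] at hk
        fin_cases k
        · exact ⟨0,rfl⟩
        · exact absurd rfl hk
        · exact ⟨1,rfl⟩
        · exact ⟨2,rfl⟩
      · rintro ⟨idx, rfl⟩
        fin_cases idx
        · exact ⟨0, by simp, rfl⟩
        · exact ⟨2, by simp, rfl⟩
        · exact ⟨3, by simp, rfl⟩
    obtain ⟨ta, tb, tc, h0a, h0b, h0c, hsum, hxeq⟩ :=
      hull3 (xv 0) (xv 2) (xv 3) x (by rw [← hset]; exact hxF)
    refine facet_core xv 0 2 3 x n _ (fun c : Fin 3 => p ⟨(c : ℕ), by omega⟩)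
      ta tb tc h0a h0b h0c hsum hxeq hd1 hd2 hnunit hD
      (B2 ε (β ⬝ᵥ (xv 0 - x)) (β ⬝ᵥ (xv 2 - x))) (B2 ε (β ⬝ᵥ (xv 2 - x)) (β ⬝ᵥ (xv 0 - x))) (B2 ε (β ⬝ᵥ (xv 0 - x)) (β ⬝ᵥ (xv 3 - x))) (B2 ε (β ⬝ᵥ (xv 3 - x)) (β ⬝ᵥ (xv 0 - x))) (B2 ε (β ⬝ᵥ (xv 2 - x)) (β ⬝ᵥ (xv 3 - x))) (B2 ε (β ⬝ᵥ (xv 3 - x)) (β ⬝ᵥ (xv 2 - x))) (B2_pos _ _ _ hε) (B2_pos _ _ _ hε) (B2_pos _ _ _ hε)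
      (B2_pos _ _ _ hε) (B2_pos _ _ _ hε) (B2_pos _ _ _ hε) ?_ ?_ ?_
    · exact rowE 0 2 1 rfl (hpair 0 2 (by decide) (by decide))
    · exact rowE 0 3 2 rfl (hpair 0 3 (by decide) (by decide))
    · exact rowE 2 3 5 rfl (hpair 2 3 (by decide) (by decide))
  · -- s = 2
    have hd1 : n ⬝ᵥ (xv 1 - xv 0) = 0 := hn 1 0 (by decide) (by decide)
    have hd2 : n ⬝ᵥ (xv 3 - xv 0) = 0 := hn 3 0 (by decide) (by decide)
    have hD : n ⬝ᵥ ((xv 1 - xv 0) ⨯₃ (xv 3 - xv 0)) ≠ 0 := by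
      intro h0
      have hc : (xv 1 - xv 0) ⨯₃ (xv 3 - xv 0) = 0 := by
        rw [cross_eq_smul_normal n _ _ hd1 hd2 hnunit, h0, zero_smul]
      apply hdet'
      have h0' : (xv 2 - xv 0) ⬝ᵥ ((xv 1 - xv 0) ⨯₃ (xv 3 - xv 0)) = 0 := by
        rw [hc, dotProduct_zero]
      rw [dot_cross] at h0' ⊢
      simp only [Pi.sub_apply] at h0' ⊢
      linear_combination -h0'
    have hset : xv '' {k | k ≠ (2 : Fin 4)} = Set.range ![xv 0, xv 1, xv 3] := by
      ext y
      constructor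
      · rintro ⟨k, hk, rfl⟩
        simp only [Set.mem_setOf_eq] at hk
        fin_cases k
        · exact ⟨0,rfl⟩
        · exact ⟨1,rfl⟩
        · exact absurd rfl hk
        · exact ⟨2,rfl⟩
      · rintro ⟨idx, rfl⟩
        fin_cases idx
        · exact ⟨0, by simp, rfl⟩
        · exact ⟨1, by simp, rfl⟩
        · exact ⟨3, by simp, rfl⟩
    obtain ⟨ta, tb, tc, h0a, h0b, h0c, hsum, hxeq⟩ :=
      hull3 (xv 0) (xv 1) (xv 3) x (by rw [← hset]; exact hxF)
    refine facet_core xv 0 1 3 x n _ (fun c : Fin 3 => p ⟨(c : ℕ), by omega⟩)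
      ta tb tc h0a h0b h0c hsum hxeq hd1 hd2 hnunit hD
      (B2 ε (β ⬝ᵥ (xv 0 - x)) (β ⬝ᵥ (xv 1 - x))) (B2 ε (β ⬝ᵥ (xv 1 - x)) (β ⬝ᵥ (xv 0 - x))) (B2 ε (β ⬝ᵥ (xv 0 - x)) (β ⬝ᵥ (xv 3 - x))) (B2 ε (β ⬝ᵥ (xv 3 - x)) (β ⬝ᵥ (xv 0 - x))) (B2 ε (β ⬝ᵥ (xv 1 - x)) (β ⬝ᵥ (xv 3 - x))) (B2 ε (β ⬝ᵥ (xv 3 - x)) (β ⬝ᵥ (xv 1 - x))) (B2_pos _ _ _ hε) (B2_pos _ _ _ hε) (B2_pos _ _ _ hε)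
      (B2_pos _ _ _ hε) (B2_pos _ _ _ hε) (B2_pos _ _ _ hε) ?_ ?_ ?_
    · exact rowE 0 1 0 rfl (hpair 0 1 (by decide) (by decide))
    · exact rowE 0 3 2 rfl (hpair 0 3 (by decide) (by decide))
    · exact rowE 1 3 4 rfl (hpair 1 3 (by decide) (by decide))
  · -- s = 3
    have hd1 : n ⬝ᵥ (xv 1 - xv 0) = 0 := hn 1 0 (by decide) (by decide)
    have hd2 : n ⬝ᵥ (xv 2 - xv 0) = 0 := hn 2 0 (by decide) (by decide)
    have hD : n ⬝ᵥ ((xv 1 - xv 0) ⨯₃ (xv 2 - xv 0)) ≠ 0 := by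
      intro h0
      have hc : (xv 1 - xv 0) ⨯₃ (xv 2 - xv 0) = 0 := by
        rw [cross_eq_smul_normal n _ _ hd1 hd2 hnunit, h0, zero_smul]
      apply hdet'
      have h0' : (xv 3 - xv 0) ⬝ᵥ ((xv 1 - xv 0) ⨯₃ (xv 2 - xv 0)) = 0 := by
        rw [hc, dotProduct_zero]
      rw [dot_cross] at h0' ⊢
      simp only [Pi.sub_apply] at h0' ⊢
      linear_combination h0'
    have hset : xv '' {k | k ≠ (3 : Fin 4)} = Set.range ![xv 0, xv 1, xv 2] := by
      ext y
      constructor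
      · rintro ⟨k, hk, rfl⟩
        simp only [Set.mem_setOf_eq] at hk
        fin_cases k
        · exact ⟨0,rfl⟩
        · exact ⟨1,rfl⟩
        · exact ⟨2,rfl⟩
        · exact absurd rfl hk
      · rintro ⟨idx, rfl⟩
        fin_cases idx
        · exact ⟨0, by simp, rfl⟩
        · exact ⟨1, by simp, rfl⟩
        · exact ⟨2, by simp, rfl⟩
    obtain ⟨ta, tb, tc, h0a, h0b, h0c, hsum, hxeq⟩ :=
      hull3 (xv 0) (xv 1) (xv 2) x (by rw [← hset]; exact hxF)
    refine facet_core xv 0 1 2 x n _ (fun c : Fin 3 => p ⟨(c : ℕ), by omega⟩)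
      ta tb tc h0a h0b h0c hsum hxeq hd1 hd2 hnunit hD
      (B2 ε (β ⬝ᵥ (xv 0 - x)) (β ⬝ᵥ (xv 1 - x))) (B2 ε (β ⬝ᵥ (xv 1 - x)) (β ⬝ᵥ (xv 0 - x))) (B2 ε (β ⬝ᵥ (xv 0 - x)) (β ⬝ᵥ (xv 2 - x))) (B2 ε (β ⬝ᵥ (xv 2 - x)) (β ⬝ᵥ (xv 0 - x))) (B2 ε (β ⬝ᵥ (xv 1 - x)) (β ⬝ᵥ (xv 2 - x))) (B2 ε (β ⬝ᵥ (xv 2 - x)) (β ⬝ᵥ (xv 1 - x))) (B2_pos _ _ _ hε) (B2_pos _ _ _ hε) (B2_pos _ _ _ hε)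
      (B2_pos _ _ _ hε) (B2_pos _ _ _ hε) (B2_pos _ _ _ hε) ?_ ?_ ?_
    · exact rowE 0 1 0 rfl (hpair 0 1 (by decide) (by decide))
    · exact rowE 0 2 1 rfl (hpair 0 2 (by decide) (by decide))
    · exact rowE 1 2 3 rfl (hpair 1 2 (by decide) (by decide))
end

section
/- For every ε > 0, all a, b ≥ 0 and every c ∈ ℝ, the 2D Bernoulli function satisfies the splitting identity a·B₂^ε(−ac, bc) + b·B₂^ε(bc, −ac) = (a+b)·B₂^ε((a+b)c, ac). (Geometrically: for a point x on the edge E_{st} dividing it into pieces of lengths a = |l_s| and b = |l_t|, one has B₂^ε(σ_s,σ_t)|l_s| + B₂^ε(σ_t,σ_s)|l_t| = |E_{st}|·B₂^ε(σ_{st}, −σ_s), the identity used to prove the edge degrees of freedom of S¹_{1⁻}(T).) -/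
open Real

open MeasureTheory Set Function

namespace B2aux

/-- numerator integral -/
noncomputable def NI (ε σ : ℝ) : ℝ := ∫ x in (0:ℝ)..1, Real.exp (σ * x / ε)

/-- denominator integral -/
noncomputable def FI (ε σ₁ σ₂ : ℝ) : ℝ :=
  ∫ y in (0:ℝ)..1, ∫ x in (0:ℝ)..(1 - y), Real.exp ((σ₁ * x + σ₂ * y) / ε)

lemma B2_eq (ε σ₁ σ₂ : ℝ) : B2 ε σ₁ σ₂ = ε * NI ε σ₁ / (2 * FI ε σ₁ σ₂) := rfl

lemma NI_reflect (ε σ : ℝ) : NI ε (-σ) = Real.exp (-σ / ε) * NI ε σ := by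
  have h := intervalIntegral.integral_comp_sub_left
    (a := (0:ℝ)) (b := 1) (fun x => Real.exp (-σ * x / ε)) 1
  simp only [sub_self, sub_zero] at h
  unfold NI
  rw [← h, ← intervalIntegral.integral_const_mul]
  apply intervalIntegral.integral_congr
  intro x _
  show Real.exp (-σ * (1 - x) / ε) = Real.exp (-σ / ε) * Real.exp (σ * x / ε)
  rw [← Real.exp_add]
  congr 1
  ring

lemma FI_reflect (ε σ₁ σ₂ : ℝ) :
    FI ε σ₁ σ₂ = Real.exp (σ₁ / ε) * FI ε (-σ₁) (σ₂ - σ₁) := by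
  unfold FI
  rw [← intervalIntegral.integral_const_mul]
  apply intervalIntegral.integral_congr
  intro y _
  show (∫ x in (0:ℝ)..(1 - y), Real.exp ((σ₁ * x + σ₂ * y) / ε))
      = Real.exp (σ₁ / ε) * ∫ x in (0:ℝ)..(1 - y), Real.exp ((-σ₁ * x + (σ₂ - σ₁) * y) / ε)
  have h := intervalIntegral.integral_comp_sub_left
    (a := (0:ℝ)) (b := 1 - y) (fun x => Real.exp ((σ₁ * x + σ₂ * y) / ε)) (1 - y)
  simp only [sub_self, sub_zero] at h
  rw [← h, ← intervalIntegral.integral_const_mul]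
  apply intervalIntegral.integral_congr
  intro x _
  show Real.exp ((σ₁ * (1 - y - x) + σ₂ * y) / ε)
      = Real.exp (σ₁ / ε) * Real.exp ((-σ₁ * x + (σ₂ - σ₁) * y) / ε)
  rw [← Real.exp_add]
  congr 1
  ring

/-- the open triangle -/
def Tri : Set (ℝ × ℝ) := {p : ℝ × ℝ | 0 < p.1 ∧ 0 < p.2 ∧ p.1 + p.2 ≤ 1}

lemma measurableSet_Tri : MeasurableSet Tri := by
  have : Tri = {p : ℝ × ℝ | 0 < p.1} ∩ ({p : ℝ × ℝ | 0 < p.2} ∩ {p : ℝ × ℝ | p.1 + p.2 ≤ 1}) := by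
    ext p; simp [Tri, and_assoc]
  rw [this]
  exact (measurableSet_lt measurable_const measurable_fst).inter
    ((measurableSet_lt measurable_const measurable_snd).inter
      (measurableSet_le (measurable_fst.add measurable_snd) measurable_const))

lemma side (f : ℝ → ℝ → ℝ) (hf : Continuous (uncurry f)) :
    (∫ y in (0:ℝ)..1, ∫ x in (0:ℝ)..(1 - y), f y x)
      = ∫ y : ℝ, ∫ x : ℝ, Tri.indicator (uncurry f) (y, x) := by
  have hzero : ∀ y : ℝ, y ∉ Set.Ioc (0:ℝ) 1 →
      (∫ x : ℝ, Tri.indicator (uncurry f) (y, x)) = 0 := by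
    intro y hy
    have hz : ∀ x : ℝ, Tri.indicator (uncurry f) (y, x) = 0 := by
      intro x
      apply Set.indicator_of_notMem
      intro hmem
      have h1 : 0 < y := hmem.1
      have h2 : 0 < x := hmem.2.1
      have h3 : y + x ≤ 1 := hmem.2.2
      simp only [Set.mem_Ioc, not_and, not_le] at hy
      linarith [hy h1]
    simp only [hz, integral_zero]
  rw [← setIntegral_eq_integral_of_forall_compl_eq_zero hzero]
  rw [intervalIntegral.integral_of_le zero_le_one]
  apply setIntegral_congr_fun measurableSet_Ioc
  intro y hy
  obtain ⟨hy0, hy1⟩ := hy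
  show (∫ x in (0:ℝ)..(1 - y), f y x) = ∫ x : ℝ, Tri.indicator (uncurry f) (y, x)
  rw [intervalIntegral.integral_of_le (by linarith : (0:ℝ) ≤ 1 - y)]
  rw [← integral_indicator measurableSet_Ioc]
  congr 1
  funext x
  by_cases hx : x ∈ Set.Ioc (0:ℝ) (1 - y)
  · rw [Set.indicator_of_mem hx, Set.indicator_of_mem (show (y, x) ∈ Tri from ⟨hy0, hx.1, by
      have := hx.2; show y + x ≤ 1; linarith⟩)]
    rfl
  · rw [Set.indicator_of_notMem hx, Set.indicator_of_notMem]
    intro hmem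
    have h2 : 0 < x := hmem.2.1
    have h3 : y + x ≤ 1 := hmem.2.2
    exact hx ⟨h2, by linarith⟩

lemma swap_triangle (f : ℝ → ℝ → ℝ) (hf : Continuous (uncurry f)) :
    (∫ y in (0:ℝ)..1, ∫ x in (0:ℝ)..(1 - y), f y x)
      = ∫ y in (0:ℝ)..1, ∫ x in (0:ℝ)..(1 - y), f x y := by
  have hg : Continuous (uncurry (flip f)) := by
    have : uncurry (flip f) = (uncurry f) ∘ Prod.swap := rfl
    rw [this]
    exact hf.comp continuous_swap
  have h1 := side f hf
  have h2 := side (flip f) hg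
  rw [h1]
  rw [show (∫ y in (0:ℝ)..1, ∫ x in (0:ℝ)..(1 - y), f x y)
      = ∫ y in (0:ℝ)..1, ∫ x in (0:ℝ)..(1 - y), (flip f) y x from rfl, h2]
  have hind : Integrable (Tri.indicator (uncurry f)) (volume.prod volume) := by
    rw [integrable_indicator_iff measurableSet_Tri]
    have hsub : Tri ⊆ Set.Icc ((0:ℝ), (0:ℝ)) (1, 1) := by
      rintro p ⟨h1, h2, h3⟩
      exact ⟨⟨le_of_lt h1, le_of_lt h2⟩,
        ⟨by show p.1 ≤ 1; linarith, by show p.2 ≤ 1; linarith⟩⟩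
    have hI : IntegrableOn (uncurry f) (Set.Icc ((0:ℝ), (0:ℝ)) (1, 1)) (volume.prod volume) := by
      rw [← MeasureTheory.Measure.volume_eq_prod]
      exact hf.continuousOn.integrableOn_compact isCompact_Icc
    exact hI.mono_set hsub
  have hswap := MeasureTheory.integral_integral_swap
    (f := fun y x => Tri.indicator (uncurry f) (y, x))
    (μ := (volume : Measure ℝ)) (ν := (volume : Measure ℝ)) hind
  rw [hswap]
  congr 1
  funext x
  congr 1
  funext y
  show Tri.indicator (uncurry f) (y, x) = Tri.indicator (uncurry (flip f)) (x, y)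
  by_cases hm : (y, x) ∈ Tri
  · have h1 : 0 < y := hm.1
    have h2 : 0 < x := hm.2.1
    have h3 : y + x ≤ 1 := hm.2.2
    rw [Set.indicator_of_mem hm,
      Set.indicator_of_mem (show (x, y) ∈ Tri from ⟨h2, h1, by show x + y ≤ 1; linarith⟩)]
    rfl
  · rw [Set.indicator_of_notMem hm, Set.indicator_of_notMem]
    intro hmem
    have h1 : 0 < x := hmem.1
    have h2 : 0 < y := hmem.2.1
    have h3 : x + y ≤ 1 := hmem.2.2
    exact hm ⟨h2, h1, by show y + x ≤ 1; linarith⟩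

lemma FI_symm (ε σ₁ σ₂ : ℝ) : FI ε σ₁ σ₂ = FI ε σ₂ σ₁ := by
  have hf : Continuous (uncurry fun y x : ℝ => Real.exp ((σ₁ * x + σ₂ * y) / ε)) := by
    apply Real.continuous_exp.comp
    exact ((continuous_const.mul continuous_snd).add
      (continuous_const.mul continuous_fst)).div_const ε
  have h := swap_triangle (fun y x => Real.exp ((σ₁ * x + σ₂ * y) / ε)) hf
  unfold FI
  refine Eq.trans h ?_
  apply intervalIntegral.integral_congr
  intro y _
  show (∫ x in (0:ℝ)..(1 - y), Real.exp ((σ₁ * y + σ₂ * x) / ε))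
      = ∫ x in (0:ℝ)..(1 - y), Real.exp ((σ₂ * x + σ₁ * y) / ε)
  apply intervalIntegral.integral_congr
  intro x _
  show Real.exp ((σ₁ * y + σ₂ * x) / ε) = Real.exp ((σ₂ * x + σ₁ * y) / ε)
  rw [add_comm]

lemma num_identity (ε c a b : ℝ) :
    a * NI ε (a * c) + b * (Real.exp (a * c / ε) * NI ε (b * c))
      = (a + b) * NI ε ((a + b) * c) := by
  have hint : ∀ u v : ℝ, IntervalIntegrable (fun y => Real.exp (c * y / ε)) volume u v :=
    fun u v => (Real.continuous_exp.comp
      ((continuous_const.mul continuous_id).div_const ε)).intervalIntegrable u v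
  have s1 : ∀ t : ℝ, t * NI ε (t * c) = ∫ y in (0:ℝ)..t, Real.exp (c * y / ε) := by
    intro t
    have h1 : NI ε (t * c) = ∫ x in (0:ℝ)..1, (fun y => Real.exp (c * y / ε)) (t * x) := by
      unfold NI
      apply intervalIntegral.integral_congr
      intro x _
      show Real.exp (t * c * x / ε) = Real.exp (c * (t * x) / ε)
      congr 1
      ring
    have h2 := intervalIntegral.smul_integral_comp_mul_left
      (a := (0:ℝ)) (b := 1) (fun y => Real.exp (c * y / ε)) t
    rw [h1, ← smul_eq_mul, h2, mul_zero, mul_one]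
  have s2 : b * (Real.exp (a * c / ε) * NI ε (b * c))
      = ∫ y in a..(a + b), Real.exp (c * y / ε) := by
    have h1 : Real.exp (a * c / ε) * NI ε (b * c)
        = ∫ x in (0:ℝ)..1, (fun y => Real.exp (c * y / ε)) (b * x + a) := by
      unfold NI
      rw [← intervalIntegral.integral_const_mul]
      apply intervalIntegral.integral_congr
      intro x _
      show Real.exp (a * c / ε) * Real.exp (b * c * x / ε) = Real.exp (c * (b * x + a) / ε)
      rw [← Real.exp_add]
      congr 1
      ring
    have h2 := intervalIntegral.smul_integral_comp_mul_add
      (a := (0:ℝ)) (b := 1) (fun y => Real.exp (c * y / ε)) b a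
    rw [h1, ← smul_eq_mul, h2, mul_zero, zero_add, mul_one, add_comm b a]
  rw [s1 a, s2, s1 (a + b)]
  exact intervalIntegral.integral_add_adjacent_intervals (hint 0 a) (hint a (a + b))

end B2aux

/-- **Splitting identity of the 2D Bernoulli function.**
For `ε > 0`, `a, b ≥ 0`, `c ∈ ℝ`:
`a·B₂^ε(−ac, bc) + b·B₂^ε(bc, −ac) = (a+b)·B₂^ε((a+b)c, ac)` —
the identity `B₂^ε(σ_s,σ_t)|l_s| + B₂^ε(σ_t,σ_s)|l_t| = |E_{st}|·B₂^ε(σ_{st},−σ_s)`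
used to prove the edge degrees of freedom of `S¹_{1⁻}(T)`. -/
theorem B2_splitting (ε : ℝ) (hε : 0 < ε) (a b : ℝ) (ha : 0 ≤ a) (hb : 0 ≤ b)
    (c : ℝ) :
    a * B2 ε (-(a * c)) (b * c) + b * B2 ε (b * c) (-(a * c))
      = (a + b) * B2 ε ((a + b) * c) (a * c) := by
  classical
  have hden1 : B2aux.FI ε (-(a * c)) (b * c)
      = Real.exp (-(a * c) / ε) * B2aux.FI ε ((a + b) * c) (a * c) := by
    rw [B2aux.FI_reflect ε (-(a * c)) (b * c), neg_neg]
    congr 1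
    rw [show b * c - -(a * c) = (a + b) * c by ring]
    exact B2aux.FI_symm ε (a * c) ((a + b) * c)
  have hden2 : B2aux.FI ε (b * c) (-(a * c))
      = Real.exp (-(a * c) / ε) * B2aux.FI ε ((a + b) * c) (a * c) := by
    rw [B2aux.FI_symm ε (b * c) (-(a * c))]
    exact hden1
  have hEE : Real.exp (a * c / ε) * Real.exp (-(a * c) / ε) = 1 := by
    rw [neg_div, Real.exp_neg, mul_inv_cancel₀ (Real.exp_ne_zero _)]
  have key : ∀ n : ℝ, n / (2 * (Real.exp (-(a * c) / ε) * B2aux.FI ε ((a + b) * c) (a * c)))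
      = (Real.exp (a * c / ε) * n) / (2 * B2aux.FI ε ((a + b) * c) (a * c)) := by
    intro n
    calc n / (2 * (Real.exp (-(a * c) / ε) * B2aux.FI ε ((a + b) * c) (a * c)))
        = (Real.exp (a * c / ε) * n) / (Real.exp (a * c / ε)
            * (2 * (Real.exp (-(a * c) / ε) * B2aux.FI ε ((a + b) * c) (a * c)))) :=
          (mul_div_mul_left _ _ (Real.exp_ne_zero _)).symm
      _ = (Real.exp (a * c / ε) * n) / (2 * B2aux.FI ε ((a + b) * c) (a * c)) := by
          rw [show Real.exp (a * c / ε)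
              * (2 * (Real.exp (-(a * c) / ε) * B2aux.FI ε ((a + b) * c) (a * c)))
              = 2 * ((Real.exp (a * c / ε) * Real.exp (-(a * c) / ε))
                * B2aux.FI ε ((a + b) * c) (a * c)) from by ring, hEE, one_mul]
  have hrefl : Real.exp (a * c / ε) * B2aux.NI ε (-(a * c)) = B2aux.NI ε (a * c) := by
    rw [B2aux.NI_reflect ε (a * c), ← mul_assoc, hEE, one_mul]
  have hnum := B2aux.num_identity ε c a b
  rw [B2aux.B2_eq, B2aux.B2_eq, B2aux.B2_eq, hden1, hden2,
    mul_div_assoc', mul_div_assoc', mul_div_assoc', key, key, ← add_div]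
  congr 1
  linear_combination ε * hnum + ε * a * hrefl
end

section
/- Let x₁,x₂,x₃,x₄ ∈ ℝ³ be affinely independent (i.e. det[x₂−x₁, x₃−x₁, x₄−x₁] ≠ 0), let T be their closed convex hull, and let x ∈ T. Let ε > 0, θ ∈ ℝ³, β := εθ, lᵢ := xᵢ − x and σᵢ := ⟨β, lᵢ⟩. For any q ∈ ℝ, the unique solution (j,φ) ∈ ℝ³×ℝ of the linear system D^V(x)·(j;φ) = (q·exp(−⟨θ,x₁⟩)·B₁^ε(−σ₁), q·exp(−⟨θ,x₂⟩)·B₁^ε(−σ₂), q·exp(−⟨θ,x₃⟩)·B₁^ε(−σ₃), q·exp(−⟨θ,x₄⟩)·B₁^ε(−σ₄))ᵀ satisfies j = 0 and φ = q·exp(−⟨θ,x⟩). (This is the kernel-preservation property of the weighted interpolation onto S⁰_{1⁻}(T): for w(y) = q·exp(−⟨θ,y⟩) ∈ ker(J⁰_θ) with constant θ, the discrete flux of Π⁰_{θ,T}w vanishes identically.) -/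
open Real Matrix

lemma B1_integral_pos (ε σ : ℝ) : 0 < ∫ x in (0:ℝ)..1, Real.exp (σ * x / ε) := by
  apply intervalIntegral.intervalIntegral_pos_of_pos
  · exact (Real.continuous_exp.comp (by continuity)).intervalIntegrable 0 1
  · intro x; exact Real.exp_pos _
  · norm_num

lemma B1_neg_eq {ε : ℝ} (hε : 0 < ε) (σ : ℝ) :
    B1 ε (-σ) = Real.exp (σ / ε) * B1 ε σ := by
  have hI : (∫ x in (0:ℝ)..1, Real.exp (-σ * x / ε))
      = Real.exp (-σ / ε) * ∫ x in (0:ℝ)..1, Real.exp (σ * x / ε) := by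
    have h1 : ∀ x : ℝ, Real.exp (-σ * x / ε)
        = Real.exp (-σ / ε) * Real.exp (σ * (1 - x) / ε) := by
      intro x
      rw [← Real.exp_add]
      ring_nf
    simp_rw [h1]
    rw [intervalIntegral.integral_const_mul]
    congr 1
    have := intervalIntegral.integral_comp_sub_left
      (fun y : ℝ => Real.exp (σ * y / ε)) (1 : ℝ) (a := 0) (b := 1)
    simpa using this
  have hIpos := B1_integral_pos ε σ
  rw [B1, B1, hI]
  rw [eq_comm]
  field_simp
  have h2 : Real.exp (σ / ε) * Real.exp (-σ / ε) = 1 := by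
    rw [← Real.exp_add]
    ring_nf
    exact Real.exp_zero
  rw [neg_div] at h2
  linear_combination h2

lemma sum_mul_dot (W : Fin 4 → ℝ) (f : Fin 4 → Fin 3 → ℝ) (v : Fin 3 → ℝ) :
    ∑ i, W i * (f i ⬝ᵥ v) = (∑ i, W i • f i) ⬝ᵥ v := by
  simp only [dotProduct, Finset.mul_sum, Finset.sum_apply, Pi.smul_apply,
    smul_eq_mul, Finset.sum_mul]
  rw [Finset.sum_comm]
  simp [mul_assoc]

/-- **Kernel preservation of the weighted interpolation onto `S⁰_{1⁻}(T)`.**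
For `w(y) = q·exp(−⟨θ,y⟩) ∈ ker(J⁰_θ)` with constant `θ` and `β = εθ`,
the unique solution `(j;φ)` of
`D^V(x)·(j;φ) = (q·exp(−⟨θ,xᵢ⟩)·B₁^ε(−σᵢ))ᵢ` satisfies `j = 0` and
`φ = q·exp(−⟨θ,x⟩)`: the discrete flux of `Π⁰_{θ,T} w` vanishes identically. -/
theorem L0_kernel_preservation
    (xv : Fin 4 → (Fin 3 → ℝ))
    (hx : Matrix.det (Matrix.of fun i j : Fin 3 => (xv j.succ - xv 0) i) ≠ 0)
    (x : Fin 3 → ℝ) (hxT : x ∈ convexHull ℝ (Set.range xv))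
    (ε : ℝ) (hε : 0 < ε) (θ : Fin 3 → ℝ) (q : ℝ) :
    let β : Fin 3 → ℝ := ε • θ
    let l : Fin 4 → (Fin 3 → ℝ) := fun i => xv i - x
    let σ : Fin 4 → ℝ := fun i => β ⬝ᵥ l i
    let DV : Matrix (Fin 4) (Fin 4) ℝ :=
      Matrix.of fun i c => if h : (c : ℕ) < 3 then l i ⟨c, h⟩ else B1 ε (σ i)
    ∀ p : Fin 4 → ℝ,
      DV.mulVec p = (fun i => q * Real.exp (-(θ ⬝ᵥ xv i)) * B1 ε (-σ i)) →
      (∀ c : Fin 4, (c : ℕ) < 3 → p c = 0) ∧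
        p 3 = q * Real.exp (-(θ ⬝ᵥ x)) := by
  intro β l σ DV p hp
  have hσ : ∀ i, σ i = ε * (θ ⬝ᵥ xv i - θ ⬝ᵥ x) := by
    intro i
    simp only [σ, β, l, smul_dotProduct, dotProduct_sub, smul_eq_mul]
    ring
  -- the candidate solution
  set A : ℝ := q * Real.exp (-(θ ⬝ᵥ x)) with hA
  set p₀ : Fin 4 → ℝ := ![0, 0, 0, A] with hp₀
  have hDV0 : ∀ i, DV i 0 = l i 0 := fun _ => rfl
  have hDV1 : ∀ i, DV i 1 = l i 1 := fun _ => rfl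
  have hDV2 : ∀ i, DV i 2 = l i 2 := fun _ => rfl
  have hDV3 : ∀ i, DV i 3 = B1 ε (σ i) := fun _ => rfl
  -- p₀ solves the system
  have hsol : DV.mulVec p₀ = (fun i => q * Real.exp (-(θ ⬝ᵥ xv i)) * B1 ε (-σ i)) := by
    funext i
    have hBneg : B1 ε (-σ i) = Real.exp (θ ⬝ᵥ xv i - θ ⬝ᵥ x) * B1 ε (σ i) := by
      rw [B1_neg_eq hε (σ i), hσ i]
      congr 2
      field_simp
    have hexp : Real.exp (-(θ ⬝ᵥ xv i)) * Real.exp (θ ⬝ᵥ xv i - θ ⬝ᵥ x)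
        = Real.exp (-(θ ⬝ᵥ x)) := by
      rw [← Real.exp_add]; ring_nf
    have q0 : p₀ 0 = 0 := rfl
    have q1 : p₀ 1 = 0 := rfl
    have q2 : p₀ 2 = 0 := rfl
    have q3 : p₀ 3 = A := rfl
    simp only [Matrix.mulVec, dotProduct, Fin.sum_univ_four,
      hDV0 i, hDV1 i, hDV2 i, hDV3 i, q0, q1, q2, q3, mul_zero, zero_add]
    rw [hBneg, hA, ← hexp]
    simp only [dotProduct]
    ring
  -- the difference lies in the kernel
  set v : Fin 4 → ℝ := p - p₀ with hv
  have hker : DV.mulVec v = 0 := by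
    rw [hv, Matrix.mulVec_sub, hp, hsol, sub_self]
  set v' : Fin 3 → ℝ := fun j => v j.castSucc with hv'
  have hrow : ∀ i : Fin 4, l i ⬝ᵥ v' + B1 ε (σ i) * v 3 = 0 := by
    intro i
    have h := congrFun hker i
    simp only [Matrix.mulVec, dotProduct, Fin.sum_univ_four,
      Pi.zero_apply] at h
    rw [hDV0 i, hDV1 i, hDV2 i, hDV3 i] at h
    simp only [dotProduct, Fin.sum_univ_three, hv']
    convert h using 2 <;> norm_num <;> exact Or.inl rfl
  -- convex hull representation of x
  rw [convexHull_range_eq_exists_affineCombination] at hxT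
  obtain ⟨s, w, hw₀, hw₁, hwx⟩ := hxT
  set W : Fin 4 → ℝ := fun i => if i ∈ s then w i else 0 with hW
  have hW₀ : ∀ i, 0 ≤ W i := by
    intro i; simp only [hW]
    split
    · exact hw₀ _ ‹_›
    · exact le_refl 0
  have hW₁ : ∑ i, W i = 1 := by
    rw [hW]
    rw [Fintype.sum_ite_mem s w]
    exact hw₁
  have hWx : ∑ i, W i • xv i = x := by
    have := Finset.affineCombination_eq_linear_combination s xv w hw₁
    rw [this] at hwx
    rw [hW, ← hwx]
    rw [← Fintype.sum_ite_mem s (fun i => w i • xv i)]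
    apply Finset.sum_congr rfl
    intro i _
    by_cases h : i ∈ s <;> simp [h]
  -- last component of v is zero
  have hv3 : v 3 = 0 := by
    have key : (∑ i, W i * B1 ε (σ i)) * v 3 = 0 := by
      have h1 : ∑ i, W i * (l i ⬝ᵥ v' + B1 ε (σ i) * v 3) = 0 := by
        have hz : ∀ i : Fin 4, W i * (l i ⬝ᵥ v' + B1 ε (σ i) * v 3) = 0 := fun i => by
          rw [hrow i, mul_zero]
        simp only [hz, Finset.sum_const_zero]
      have h2 : ∑ i, W i * (l i ⬝ᵥ v') = 0 := by
        have : ∀ i, l i ⬝ᵥ v' = xv i ⬝ᵥ v' - x ⬝ᵥ v' := by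
          intro i; simp [l, sub_dotProduct]
        simp_rw [this, mul_sub, Finset.sum_sub_distrib, ← Finset.sum_mul, hW₁, one_mul]
        have := sum_mul_dot W xv v'
        rw [hWx] at this
        simp [dotProduct] at this ⊢
        linarith [this]
      calc (∑ i, W i * B1 ε (σ i)) * v 3
          = ∑ i, W i * (l i ⬝ᵥ v' + B1 ε (σ i) * v 3) := by
            rw [eq_comm]
            simp_rw [mul_add]
            rw [Finset.sum_add_distrib, h2, zero_add]
            simp_rw [← mul_assoc]
            rw [← Finset.sum_mul]
        _ = 0 := h1
    have hS : (0:ℝ) < ∑ i, W i * B1 ε (σ i) := by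
      rcases lt_or_eq_of_le (Finset.sum_nonneg fun i _ =>
        mul_nonneg (hW₀ i) (B1_pos hε (σ i)).le) with h | h
      · exact h
      · exfalso
        have hall := (Finset.sum_eq_zero_iff_of_nonneg fun i _ =>
          mul_nonneg (hW₀ i) (B1_pos hε (σ i)).le).mp h.symm
        have : ∀ i : Fin 4, W i = 0 := by
          intro i
          have := hall i (Finset.mem_univ i)
          exact (mul_eq_zero.mp this).resolve_right (B1_pos hε (σ i)).ne'
        rw [Finset.sum_congr rfl (fun i _ => this i)] at hW₁
        simp at hW₁
    exact (mul_eq_zero.mp key).resolve_left hS.ne'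
  -- first three components of v are zero
  have hdot : ∀ i, l i ⬝ᵥ v' = 0 := by
    intro i
    have := hrow i
    rw [hv3, mul_zero, add_zero] at this
    exact this
  have hv'0 : v' = 0 := by
    set M : Matrix (Fin 3) (Fin 3) ℝ := Matrix.of fun i j : Fin 3 => (xv j.succ - xv 0) i with hM
    have hmv : Mᵀ.mulVec v' = 0 := by
      funext j
      have h1 := hdot j.succ
      have h0 := hdot 0
      have hsub : ∑ i, (l j.succ i - l 0 i) * v' i = 0 := by
        simp_rw [sub_mul, Finset.sum_sub_distrib]
        have e1 : ∑ i, l j.succ i * v' i = 0 := h1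
        have e0 : ∑ i, l 0 i * v' i = 0 := h0
        rw [e1, e0, sub_zero]
      have hsub2 : ∀ i, l j.succ i - l 0 i = (xv j.succ - xv 0) i := by
        intro i
        show (xv j.succ i - x i) - (xv 0 i - x i) = _
        simp only [Pi.sub_apply]
        ring
      show ∑ i, (xv j.succ - xv 0) i * v' i = 0
      simp_rw [← hsub2]
      exact hsub
    exact Matrix.eq_zero_of_mulVec_eq_zero (by rwa [Matrix.det_transpose]) hmv
  have hvz : ∀ c : Fin 4, (c : ℕ) < 3 → v c = 0 := by
    intro c hc
    have : c = Fin.castSucc ⟨(c : ℕ), hc⟩ := by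
      apply Fin.ext; simp
    rw [this]
    exact congrFun hv'0 ⟨(c : ℕ), hc⟩
  constructor
  · intro c hc
    have h1 := hvz c hc
    simp only [hv, Pi.sub_apply] at h1
    have h2 : p₀ c = 0 := by
      fin_cases c <;> simp_all [hp₀]
    linarith
  · have h1 := hv3
    simp only [hv, Pi.sub_apply] at h1
    have h2 : p₀ 3 = A := rfl
    rw [hA] at h2
    linarith
end
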